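/- arXiv:1201.0366 — 13 statements merged into one kernel-verified Lean document; each statement's English description precedes it below -/
import Mathlib

section
/- Let p be a prime and F a finite-dimensional F_p-vector space with a direct sum decomposition F = U_1 ⊕ ... ⊕ U_n. For each i = 1,...,n let *_i be a binary operation on F that is additive in each argument, and let A_i ⊆ F be an F_p-subspace with dim_{F_p} A_i + dim_{F_p} U_i = dim_{F_p} F. Assume the set {(*_i, A_i)} is compatible, i.e. whenever x *_i y ∈ A_i for every i, then x = 0 or y = 0. If for each i, f_i : F → U_i is an F_p-linear map with kernel A_i, then the product x ∘ y := Σ_i f_i(x *_i y) makes (F, +, ∘) a presemifield: ∘ is additive in each argument and x ∘ y = 0 implies x = 0 or y = 0. -/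
/-- Proposition 2.2 (projection construction of presemifields). -/
theorem projection_construction_presemifield
    (p : ℕ) [Fact p.Prime] (F : Type*) [AddCommGroup F]
    [Module (ZMod p) F] [FiniteDimensional (ZMod p) F] (n : ℕ)
    (U A : Fin n → Submodule (ZMod p) F)
    (hdirect : DirectSum.IsInternal U)
    (star : Fin n → F → F → F)
    (hstar_addl : ∀ i (x y z : F), star i (x + y) z = star i x z + star i y z)
    (hstar_addr : ∀ i (x y z : F), star i x (y + z) = star i x y + star i x z)
    (hdim : ∀ i, Module.finrank (ZMod p) (A i) + Module.finrank (ZMod p) (U i)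
      = Module.finrank (ZMod p) F)
    (hcompat : ∀ x y : F, (∀ i, star i x y ∈ A i) → x = 0 ∨ y = 0)
    (f : Fin n → F →ₗ[ZMod p] F)
    (hrange : ∀ i, LinearMap.range (f i) ≤ U i)
    (hker : ∀ i, LinearMap.ker (f i) = A i) :
    (∀ x y z : F, (∑ i, f i (star i (x + y) z))
        = (∑ i, f i (star i x z)) + (∑ i, f i (star i y z))) ∧
    (∀ x y z : F, (∑ i, f i (star i x (y + z)))
        = (∑ i, f i (star i x y)) + (∑ i, f i (star i x z))) ∧
    (∀ x y : F, (∑ i, f i (star i x y)) = 0 → x = 0 ∨ y = 0) := by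
  refine ⟨?_, ?_, ?_⟩
  · intro x y z
    simp [hstar_addl, Finset.sum_add_distrib]
  · intro x y z
    simp [hstar_addr, Finset.sum_add_distrib]
  · intro x y h
    apply hcompat
    intro j
    rw [← hker j, LinearMap.mem_ker]
    -- build an element of the direct sum
    set v : DirectSum (Fin n) (fun i => U i) :=
      ∑ i, DirectSum.lof (ZMod p) (Fin n) (fun i => U i) i
        ⟨f i (star i x y), hrange i ⟨star i x y, rfl⟩⟩ with hv
    have hgv : DirectSum.coeLinearMap U v = 0 := by
      rw [hv, map_sum]
      simpa [DirectSum.lof_eq_of, DirectSum.coeLinearMap_of] using h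
    have hv0 : v = 0 := by
      apply hdirect.injective
      exact hgv
    have := congrArg (fun w => (DirectSum.component (ZMod p) (Fin n) (fun i => (U i : Type _)) j) w) hv0
    simp only [hv, map_sum, map_zero] at this
    rw [Finset.sum_eq_single j] at this
    · simpa [DirectSum.component.lof_self] using congrArg Subtype.val this
    · intro i _ hij
      exact DFinsupp.single_eq_of_ne hij.symm
    · simp
end

section
/- Let F be a finite field with subfields F₁ ⊆ F₂ ⊆ F, and let * be a presemifield product on F (additive in each argument, no zero divisors) such that (i) (ax)*y = x*(ay) = a(x*y) for all x,y ∈ F and a ∈ F₁, and (ii) (xk)*y = x*(ky) for all x,y ∈ F and k ∈ F₂. Let β, γ : F → F satisfy 1*β(x) = x and γ(x)*1 = 1*x for all x ∈ F, and define x∘y := β(γ(x)*y). Then (F,+,∘) is a semifield with identity element 1, every element of F₁ lies in the center of (F,+,∘), every element of F₂ lies in the middle nucleus of (F,+,∘), and k∘y = yk for all y ∈ F and k ∈ F₂. -/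
/-- The semifield product `x ∘ y := β (γ x * y)` associated with a presemifield product. -/
def circOp {F : Type*} (star : F → F → F) (β γ : F → F) (x y : F) : F :=
  β (star (γ x) y)

/-- Proposition 3.1. -/
theorem presemifield_to_semifield_center_middle_nucleus
    (F : Type*) [Field F] [Fintype F] (F1 F2 : Subfield F) (h12 : F1 ≤ F2)
    (star : F → F → F)
    (haddl : ∀ x y z : F, star (x + y) z = star x z + star y z)
    (haddr : ∀ x y z : F, star x (y + z) = star x y + star x z)
    (hnz : ∀ x y : F, star x y = 0 → x = 0 ∨ y = 0)
    (hi1 : ∀ a ∈ F1, ∀ x y : F, star (a * x) y = a * star x y)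
    (hi2 : ∀ a ∈ F1, ∀ x y : F, star x (a * y) = a * star x y)
    (hii : ∀ k ∈ F2, ∀ x y : F, star (x * k) y = star x (k * y))
    (β γ : F → F)
    (hβ : ∀ x, star 1 (β x) = x)
    (hγ : ∀ x, star (γ x) 1 = star 1 x) :
    (∀ x y z : F, circOp star β γ (x + y) z = circOp star β γ x z + circOp star β γ y z) ∧
    (∀ x y z : F, circOp star β γ x (y + z) = circOp star β γ x y + circOp star β γ x z) ∧
    (∀ x y : F, circOp star β γ x y = 0 → x = 0 ∨ y = 0) ∧
    (∀ x : F, circOp star β γ x 1 = x) ∧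
    (∀ x : F, circOp star β γ 1 x = x) ∧
    (∀ a ∈ F1,
      (∀ x : F, circOp star β γ a x = circOp star β γ x a) ∧
      (∀ x y : F, circOp star β γ (circOp star β γ a x) y
        = circOp star β γ a (circOp star β γ x y)) ∧
      (∀ x y : F, circOp star β γ (circOp star β γ x a) y
        = circOp star β γ x (circOp star β γ a y)) ∧
      (∀ x y : F, circOp star β γ (circOp star β γ x y) a
        = circOp star β γ x (circOp star β γ y a))) ∧
    (∀ k ∈ F2,
      (∀ x y : F, circOp star β γ (circOp star β γ x k) y
        = circOp star β γ x (circOp star β γ k y)) ∧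
      (∀ y : F, circOp star β γ k y = y * k)) := by
  -- basic zero lemmas
  have hr0 : ∀ x : F, star x 0 = 0 := by
    intro x
    have h := haddr x 0 0
    rw [add_zero] at h
    exact left_eq_add.mp h
  have hl0 : ∀ x : F, star 0 x = 0 := by
    intro x
    have h := haddl 0 0 x
    rw [add_zero] at h
    exact left_eq_add.mp h
  have hrsub : ∀ x y z : F, star x (y - z) = star x y - star x z := by
    intro x y z
    have h : star x (y - z) + star x z = star x y := by
      rw [← haddr, sub_add_cancel]
    exact eq_sub_of_add_eq h
  have hlsub : ∀ x y z : F, star (x - y) z = star x z - star y z := by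
    intro x y z
    have h : star (x - y) z + star y z = star x z := by
      rw [← haddl, sub_add_cancel]
    exact eq_sub_of_add_eq h
  -- injectivity of left/right multiplication by 1
  have hLinj : ∀ a b : F, star 1 a = star 1 b → a = b := by
    intro a b h
    have h2 : star 1 (a - b) = 0 := by rw [hrsub, h, sub_self]
    rcases hnz _ _ h2 with h3 | h3
    · exact absurd h3 one_ne_zero
    · exact sub_eq_zero.mp h3
  have hRinj : ∀ a b : F, star a 1 = star b 1 → a = b := by
    intro a b h
    have h2 : star (a - b) 1 = 0 := by rw [hlsub, h, sub_self]
    rcases hnz _ _ h2 with h3 | h3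
    · exact sub_eq_zero.mp h3
    · exact absurd h3 one_ne_zero
  -- β is a left inverse of star 1
  have hβinv : ∀ x : F, β (star 1 x) = x := by
    intro x
    exact hLinj _ _ (by rw [hβ])
  have hβ0 : ∀ t : F, β t = 0 → t = 0 := by
    intro t h
    rw [← hβ t, h, hr0]
  -- γ fixes F2
  have hγF2 : ∀ k ∈ F2, γ k = k := by
    intro k hk
    apply hRinj
    rw [hγ]
    calc star 1 k = star 1 (k * 1) := by rw [mul_one]
      _ = star (1 * k) 1 := (hii k hk 1 1).symm
      _ = star k 1 := by rw [one_mul]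
  -- scalar lemmas for F1
  have hβmul : ∀ a ∈ F1, ∀ x : F, β (a * x) = a * β x := by
    intro a ha x
    apply hLinj
    rw [hβ, hi2 a ha 1 (β x), hβ]
  have hγmul : ∀ a ∈ F1, ∀ x : F, γ (a * x) = a * γ x := by
    intro a ha x
    apply hRinj
    rw [hγ, hi2 a ha 1 x, hi1 a ha (γ x) 1, hγ]
  -- additivity of β and γ
  have hβadd : ∀ s t : F, β (s + t) = β s + β t := by
    intro s t
    apply hLinj
    rw [hβ, haddr, hβ, hβ]
  have hγadd : ∀ s t : F, γ (s + t) = γ s + γ t := by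
    intro s t
    apply hRinj
    rw [hγ, haddr, haddl, hγ, hγ]
  -- key formulas
  have hcirc : ∀ x y : F, circOp star β γ x y = β (star (γ x) y) := fun _ _ => rfl
  have hcR : ∀ x : F, circOp star β γ x 1 = x := by
    intro x
    rw [hcirc, hγ, hβinv]
  have hcL : ∀ x : F, circOp star β γ 1 x = x := by
    intro x
    rw [hcirc, hγF2 1 F2.one_mem, hβinv]
  have haL : ∀ a ∈ F1, ∀ x : F, circOp star β γ a x = a * x := by
    intro a ha x
    rw [hcirc, hγF2 a (h12 ha)]
    calc β (star a x) = β (star (a * 1) x) := by rw [mul_one]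
      _ = β (a * star 1 x) := by rw [hi1 a ha]
      _ = a * β (star 1 x) := hβmul a ha _
      _ = a * x := by rw [hβinv]
  have haR : ∀ a ∈ F1, ∀ x : F, circOp star β γ x a = a * x := by
    intro a ha x
    rw [hcirc]
    calc β (star (γ x) a) = β (star (γ x) (a * 1)) := by rw [mul_one]
      _ = β (a * star (γ x) 1) := by rw [hi2 a ha]
      _ = a * β (star 1 x) := by rw [hβmul a ha, hγ]
      _ = a * x := by rw [hβinv]
  have hscalarL : ∀ a ∈ F1, ∀ x y : F,
      circOp star β γ (a * x) y = a * circOp star β γ x y := by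
    intro a ha x y
    rw [hcirc, hcirc, hγmul a ha, hi1 a ha, hβmul a ha]
  have hscalarR : ∀ a ∈ F1, ∀ x y : F,
      circOp star β γ x (a * y) = a * circOp star β γ x y := by
    intro a ha x y
    rw [hcirc, hcirc, hi2 a ha, hβmul a ha]
  have hkL : ∀ k ∈ F2, ∀ y : F, circOp star β γ k y = k * y := by
    intro k hk y
    rw [hcirc, hγF2 k hk]
    calc β (star k y) = β (star (1 * k) y) := by rw [one_mul]
      _ = β (star 1 (k * y)) := by rw [hii k hk]
      _ = k * y := hβinv _
  refine ⟨?_, ?_, ?_, hcR, hcL, ?_, ?_⟩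
  · intro x y z
    rw [hcirc, hcirc, hcirc, hγadd, haddl, hβadd]
  · intro x y z
    rw [hcirc, hcirc, hcirc, haddr, hβadd]
  · intro x y h
    rw [hcirc] at h
    have h2 := hβ0 _ h
    rcases hnz _ _ h2 with h3 | h3
    · left
      have h4 : star 1 x = 0 := by rw [← hγ, h3, hl0]
      rcases hnz _ _ h4 with h5 | h5
      · exact absurd h5 one_ne_zero
      · exact h5
    · right; exact h3
  · intro a ha
    refine ⟨?_, ?_, ?_, ?_⟩
    · intro x
      rw [haL a ha, haR a ha]
    · intro x y
      rw [haL a ha, hscalarL a ha, haL a ha]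
    · intro x y
      rw [haR a ha, haL a ha, hscalarL a ha, hscalarR a ha]
    · intro x y
      rw [haR a ha, haR a ha, hscalarR a ha]
  · intro k hk
    constructor
    · intro x y
      rw [hkL k hk]
      have hγk : γ (circOp star β γ x k) = γ x * k := by
        apply hRinj
        rw [hγ, hcirc, hβ]
        calc star (γ x) k = star (γ x) (k * 1) := by rw [mul_one]
          _ = star (γ x * k) 1 := (hii k hk _ _).symm
      rw [hcirc, hγk, hii k hk, ← hcirc]
    · intro y
      rw [hkL k hk, mul_comm]
end

section
/- Let F be a finite field and * a presemifield product on F (additive in each argument, no zero divisors). Let β, γ : F → F satisfy 1*β(x) = x and γ(x)*1 = 1*x for all x ∈ F, and define x∘y := β(γ(x)*y). Then: (a) any x ∈ F satisfying (γ(x)y)*z = γ(x)(y*z) for all y,z ∈ F lies in the left nucleus of (F,+,∘); (b) any z ∈ F satisfying x*(yz) = z(x*y) for all x,y ∈ F lies in the right nucleus of (F,+,∘) and satisfies y∘z = yz for all y ∈ F (juxtaposition denoting the field multiplication of F). -/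
/-- Proposition 3.2. -/
theorem left_and_right_nucleus_criteria
    (F : Type*) [Field F] [Fintype F]
    (star : F → F → F)
    (haddl : ∀ x y z : F, star (x + y) z = star x z + star y z)
    (haddr : ∀ x y z : F, star x (y + z) = star x y + star x z)
    (hnz : ∀ x y : F, star x y = 0 → x = 0 ∨ y = 0)
    (β γ : F → F)
    (hβ : ∀ x, star 1 (β x) = x)
    (hγ : ∀ x, star (γ x) 1 = star 1 x) :
    (∀ x : F, (∀ y z : F, star (γ x * y) z = γ x * star y z) →
      ∀ y z : F, circOp star β γ (circOp star β γ x y) z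
        = circOp star β γ x (circOp star β γ y z)) ∧
    (∀ z : F, (∀ x y : F, star x (y * z) = z * star x y) →
      (∀ x y : F, circOp star β γ (circOp star β γ x y) z
        = circOp star β γ x (circOp star β γ y z)) ∧
      (∀ y : F, circOp star β γ y z = y * z)) := by
  -- basic facts
  have hr0 : ∀ x : F, star x 0 = 0 := by
    intro x
    have := haddr x 0 0
    simp at this
    linear_combination this
  have hrneg : ∀ x y : F, star x (-y) = - star x y := by
    intro x y
    have := haddr x y (-y)
    simp [hr0] at this
    linear_combination -this
  have hl0 : ∀ x : F, star 0 x = 0 := by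
    intro x
    have := haddl 0 0 x
    simp at this
    linear_combination this
  have hlneg : ∀ x y : F, star (-x) y = - star x y := by
    intro x y
    have := haddl x (-x) y
    simp [hl0] at this
    linear_combination -this
  -- L₁ injective
  have hL1 : ∀ a b : F, star 1 a = star 1 b → a = b := by
    intro a b h
    have h2 : star 1 (a + (-b)) = 0 := by
      rw [haddr, hrneg, h]; ring
    rcases hnz _ _ h2 with h3 | h3
    · exact absurd h3 one_ne_zero
    · linear_combination h3
  -- R₁ injective
  have hR1 : ∀ a b : F, star a 1 = star b 1 → a = b := by
    intro a b h
    have h2 : star (a + (-b)) 1 = 0 := by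
      rw [haddl, hlneg, h]; ring
    rcases hnz _ _ h2 with h3 | h3
    · linear_combination h3
    · exact absurd h3 one_ne_zero
  -- β is a two-sided inverse of L₁
  have hβL : ∀ w : F, β (star 1 w) = w := by
    intro w
    apply hL1
    rw [hβ]
  constructor
  · -- left nucleus
    intro x hx y z
    have hA : ∀ w : F, star (γ x) w = γ x * star 1 w := by
      intro w
      have := hx 1 w
      rwa [mul_one] at this
    have hγmul : γ (circOp star β γ x y) = γ x * γ y := by
      apply hR1
      rw [hγ, circOp, hβ, hx, hγ, ← hA]
    show β (star (γ (circOp star β γ x y)) z) = β (star (γ x) (β (star (γ y) z)))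
    rw [hγmul, hx, hA (β (star (γ y) z)), hβ]
  · intro z hz
    have hcirc : ∀ y : F, circOp star β γ y z = y * z := by
      intro y
      have h1 : star (γ y) z = star 1 (y * z) := by
        rw [hz 1 y, ← hγ]
        conv_lhs => rw [show z = 1 * z by ring]
        rw [hz (γ y) 1]
      rw [circOp, h1, hβL]
    refine ⟨?_, hcirc⟩
    intro x y
    rw [hcirc (circOp star β γ x y)]
    show β (star (γ x) y) * z = β (star (γ x) (circOp star β γ y z))
    rw [hcirc y]
    apply hL1
    rw [hβ, hz 1 (β (star (γ x) y)), hβ, hz (γ x) y]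
end

section
/- Let (F,+,*) be a finite presemifield, fix e ≠ 0 in F, and let α : F → F be the (unique) map satisfying α(x)*e = x for all x ∈ F. Then (F,+,*) is isotopic to a commutative presemifield if and only if there exists v ≠ 0 in F such that α(v*x)*y = α(v*y)*x for all x,y ∈ F. -/
/-- Corollary 3.6 (Ganley's criterion for presemifields). -/
theorem ganley_criterion_presemifield
    (F : Type*) [AddCommGroup F] [Fintype F]
    (star : F → F → F)
    (haddl : ∀ x y z : F, star (x + y) z = star x z + star y z)
    (haddr : ∀ x y z : F, star x (y + z) = star x y + star x z)
    (hnz : ∀ x y : F, star x y = 0 → x = 0 ∨ y = 0)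
    (e : F) (he : e ≠ 0)
    (α : F → F) (hα : ∀ x : F, star (α x) e = x) :
    (∃ (cdot : F → F → F) (A B C : F ≃+ F),
      (∀ x y z : F, cdot (x + y) z = cdot x z + cdot y z) ∧
      (∀ x y z : F, cdot x (y + z) = cdot x y + cdot x z) ∧
      (∀ x y : F, cdot x y = 0 → x = 0 ∨ y = 0) ∧
      (∀ x y : F, cdot x y = cdot y x) ∧
      (∀ x y : F, cdot (A x) (B y) = C (star x y))) ↔
    (∃ v : F, v ≠ 0 ∧ ∀ x y : F, star (α (star v x)) y = star (α (star v y)) x) := by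
  constructor
  · rintro ⟨cdot, A, B, C, hl, hr, hnz', hcomm, hiso⟩
    have hBe : B e ≠ 0 := fun h => he (B.injective (h.trans (map_zero B).symm))
    refine ⟨A.symm (B e), fun h => hBe (by simpa using congrArg A h), ?_⟩
    -- negation in the left slot of cdot
    have hlneg : ∀ a u : F, cdot (-a) u = -(cdot a u) := by
      intro a u
      have h := hl a (-a) u
      rw [add_neg_cancel] at h
      have h0 : cdot 0 u = 0 := by
        have := hl 0 0 u; rw [add_zero] at this
        exact (add_eq_left.mp this.symm)
      rw [h0] at h
      exact eq_neg_of_add_eq_zero_left ((add_comm _ _).trans h.symm)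
    -- right cancellation by B e
    have hcancel : ∀ a b : F, cdot a (B e) = cdot b (B e) → a = b := by
      intro a b h
      have : cdot (a + -b) (B e) = 0 := by
        rw [hl, hlneg, h, add_neg_cancel]
      rcases hnz' _ _ this with h' | h'
      · have h'' : a - b = 0 := by rwa [sub_eq_add_neg]
        exact sub_eq_zero.mp h''
      · exact absurd h' hBe
    -- key: A (α z) is determined
    have hkey : ∀ z : F, cdot (A (α z)) (B e) = C z := by
      intro z
      have := hiso (α z) e
      rw [hα] at this
      exact this
    have hAα : ∀ x : F, A (α (star (A.symm (B e)) x)) = B x := by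
      intro x
      apply hcancel
      rw [hkey]
      have := hiso (A.symm (B e)) x
      rw [A.apply_symm_apply] at this
      rw [← this, hcomm]
    intro x y
    apply C.injective
    have h1 := hiso (α (star (A.symm (B e)) x)) y
    have h2 := hiso (α (star (A.symm (B e)) y)) x
    rw [hAα] at h1 h2
    rw [← h1, ← h2, hcomm]
  · rintro ⟨v, hv, hsym⟩
    -- basic zero facts
    have hz0l : ∀ y : F, star 0 y = 0 := by
      intro y
      have := haddl 0 0 y; rw [add_zero] at this
      exact (add_eq_left.mp this.symm)
    have hz0r : ∀ x : F, star x 0 = 0 := by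
      intro x
      have := haddr x 0 0; rw [add_zero] at this
      exact (add_eq_left.mp this.symm)
    -- homs
    set Re : F →+ F := AddMonoidHom.mk' (fun x => star x e) (fun a b => haddl a b e) with hRe
    set Lv : F →+ F := AddMonoidHom.mk' (fun x => star v x) (fun a b => haddr v a b) with hLv
    have hReinj : Function.Injective Re := by
      intro a b h
      have h2 : Re (a - b) = 0 := by rw [map_sub, h, sub_self]
      have h3 : star (a - b) e = 0 := h2
      rcases hnz _ _ h3 with h' | h'
      · exact sub_eq_zero.mp h'
      · exact absurd h' he
    have hLvinj : Function.Injective Lv := by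
      intro a b h
      have h2 : Lv (a - b) = 0 := by rw [map_sub, h, sub_self]
      have h3 : star v (a - b) = 0 := h2
      rcases hnz _ _ h3 with h' | h'
      · exact absurd h' hv
      · exact sub_eq_zero.mp h'
    have hαadd : ∀ a b : F, α (a + b) = α a + α b := by
      intro a b
      apply hReinj
      show star (α (a + b)) e = star (α a + α b) e
      rw [hα, haddl, hα, hα]
    have hα0 : ∀ z : F, α z = 0 → z = 0 := by
      intro z h
      rw [← hα z, h, hz0l]
    -- equivs
    have hLvbij : Function.Bijective Lv := (Finite.injective_iff_bijective).mp hLvinj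
    have hRebij : Function.Bijective Re := (Finite.injective_iff_bijective).mp hReinj
    set LvE : F ≃+ F := AddEquiv.ofBijective Lv hLvbij with hLvE
    set ReE : F ≃+ F := AddEquiv.ofBijective Re hRebij with hReE
    set A : F ≃+ F := ReE.trans LvE.symm with hA
    have hAv : ∀ x : F, star v (A x) = star x e := by
      intro x
      have : LvE (A x) = ReE x := LvE.apply_symm_apply (ReE x)
      exact this
    refine ⟨fun x y => star (α (star v x)) y, A, AddEquiv.refl F, AddEquiv.refl F,
      ?_, ?_, ?_, ?_, ?_⟩
    · intro x y z
      show star (α (star v (x + y))) z = star (α (star v x)) z + star (α (star v y)) z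
      rw [haddr v, hαadd, haddl]
    · intro x y z
      show star (α (star v x)) (y + z) = star (α (star v x)) y + star (α (star v x)) z
      rw [haddr]
    · intro x y h
      rcases hnz _ _ h with h' | h'
      · have := hα0 _ h'
        rcases hnz _ _ this with h'' | h''
        · exact absurd h'' hv
        · exact Or.inl h''
      · exact Or.inr h'
    · exact hsym
    · intro x y
      show star (α (star v (A x))) y = star x y
      rw [hAv]
      congr 1
      apply hReinj
      show star (α (star x e)) e = star x e
      rw [hα]
end

section
/- Let p be a prime, 1 ≤ s < m, σ = p^s, F = F_{p^{2m}} the field of order p^{2m} with subfield L = F_{p^m}, and write x̄ := x^{p^m} for x ∈ F. Let l ∈ L*, μ ∈ F*, and define x ∘_A y := x y^σ + l x^σ y on F. Then the following compatibility condition holds — for all x, y ∈ F, if xy ∈ L and μ(x̄ ∘_A y) ∈ L then x = 0 or y = 0 — if and only if both: (i) −l ∉ {t^{σ−1} : t ∈ L*}, and (ii) μ^{p^m − 1} does not lie in {u^{σ+1} : u ∈ F*, u^{p^m + 1} = 1}, which is the subgroup of index gcd(p^m + 1, σ + 1) of the norm-one subgroup {u ∈ F* : u^{p^m+1} = 1}.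 -/
lemma aux_cyclic_pow_surj {G : Type*} [Group G] [Fintype G] [IsCyclic G] (d e : ℕ)
    (hde : Fintype.card G = d * e) (he : (e : ℤ) ≠ 0) (u : G) (hu : u ^ e = 1) :
    ∃ x : G, x ^ d = u := by
  obtain ⟨g, hg⟩ := IsCyclic.exists_generator (α := G)
  obtain ⟨k, hk⟩ := hg u
  simp only [] at hk
  have horder : orderOf g = d * e := by
    rw [orderOf_eq_card_of_forall_mem_zpowers hg, ← hde, Nat.card_eq_fintype_card]
  have h1 : ((d : ℤ) * e) ∣ k * e := by
    have : g ^ (k * (e : ℤ)) = 1 := by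
      rw [zpow_mul, hk, zpow_natCast, hu]
    have h2 := orderOf_dvd_iff_zpow_eq_one.mpr this
    rw [horder] at h2
    exact_mod_cast h2
  have h2 : (d : ℤ) ∣ k := (mul_dvd_mul_iff_right he).mp h1
  obtain ⟨j, hj⟩ := h2
  refine ⟨g ^ j, ?_⟩
  rw [← zpow_natCast (g ^ j) d, ← zpow_mul, mul_comm, ← hj, hk]


/-- Theorem 5.1: compatibility criterion defining the presemifields `A(p,m,s,l,μ)`.
Here `F` is the field of order `p^(2m)`, `L = {x : F | x^(p^m) = x}` is its subfield of
order `p^m`, `x̄ = x^(p^m)`, `σ = p^s`, and `x ∘_A y = x * y^σ + l * x^σ * y`. -/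
theorem A_family_compatibility
    (p m s : ℕ) (hp : p.Prime) (hs : 1 ≤ s) (hsm : s < m)
    (F : Type*) [Field F] [Fintype F] (hcard : Fintype.card F = p ^ (2 * m))
    (l : F) (hl0 : l ≠ 0) (hlL : l ^ (p ^ m) = l)
    (μ : F) (hμ : μ ≠ 0) :
    (∀ x y : F,
        (x * y) ^ (p ^ m) = x * y →
        (μ * (x ^ (p ^ m) * y ^ (p ^ s) + l * (x ^ (p ^ m)) ^ (p ^ s) * y)) ^ (p ^ m)
          = μ * (x ^ (p ^ m) * y ^ (p ^ s) + l * (x ^ (p ^ m)) ^ (p ^ s) * y) →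
        x = 0 ∨ y = 0) ↔
      ((¬ ∃ t : F, t ≠ 0 ∧ t ^ (p ^ m) = t ∧ t ^ (p ^ s - 1) = -l) ∧
        (¬ ∃ u : F, u ≠ 0 ∧ u ^ (p ^ m + 1) = 1 ∧ μ ^ (p ^ m - 1) = u ^ (p ^ s + 1))) := by
  classical
  have hq1 : 1 ≤ p ^ m := Nat.one_le_pow _ _ hp.pos
  have hσ1 : 1 ≤ p ^ s := Nat.one_le_pow _ _ hp.pos
  have hpfact : Fact p.Prime := ⟨hp⟩
  have hchar : CharP F p := by
    have h0 : CharP F (ringChar F) := ringChar.charP F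
    obtain ⟨n, hrp, hcard'⟩ := FiniteField.card F (ringChar F)
    have hdvd : ringChar F ∣ p ^ (2 * m) := by
      rw [← hcard, hcard']
      exact dvd_pow_self _ (by positivity)
    have hre : ringChar F = p :=
      (Nat.prime_dvd_prime_iff_eq hrp hp).mp (hrp.dvd_of_dvd_pow hdvd)
    rwa [hre] at h0
  have hcard2 : Fintype.card F = p ^ m * p ^ m := by
    rw [hcard, two_mul, pow_add]
  have hFq : ∀ x : F, (x ^ (p ^ m)) ^ (p ^ m) = x := by
    intro x
    rw [← pow_mul, ← hcard2, FiniteField.pow_card]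
  have hfrob : ∀ x y : F, (x + y) ^ (p ^ m) = x ^ (p ^ m) + y ^ (p ^ m) :=
    fun x y => add_pow_char_pow x y p m
  have hμpow : μ ^ (p ^ m - 1) * μ = μ ^ (p ^ m) := by
    rw [← pow_succ, Nat.sub_add_cancel hq1]
  constructor
  · intro C
    constructor
    · -- part (i)
      rintro ⟨t, ht0, htq, hts⟩
      have htσ : t ^ (p ^ s) = -l * t := by
        calc t ^ (p ^ s) = t ^ (p ^ s - 1) * t := by
              rw [← pow_succ, Nat.sub_add_cancel hσ1]
          _ = -l * t := by rw [hts]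
      have h1 : ((1 : F) * t) ^ (p ^ m) = 1 * t := by rw [one_mul]; exact htq
      have h2 : (μ * ((1:F) ^ (p ^ m) * t ^ (p ^ s) + l * ((1:F) ^ (p ^ m)) ^ (p ^ s) * t)) ^ (p ^ m)
          = μ * ((1:F) ^ (p ^ m) * t ^ (p ^ s) + l * ((1:F) ^ (p ^ m)) ^ (p ^ s) * t) := by
        have hz : (1:F) ^ (p ^ m) * t ^ (p ^ s) + l * ((1:F) ^ (p ^ m)) ^ (p ^ s) * t = 0 := by
          rw [one_pow, one_pow, one_mul, htσ]; ring
        rw [hz, mul_zero, zero_pow (by positivity)]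
      rcases C 1 t h1 h2 with h | h
      · exact one_ne_zero h
      · exact ht0 h
    · -- part (ii)
      rintro ⟨u, hu0, huq, huμ⟩
      have hqq : (p ^ m - 1) * (p ^ m + 1) = p ^ m * p ^ m - 1 := by
        have h2 : 1 ≤ p ^ m * p ^ m := Nat.one_le_iff_ne_zero.mpr (by positivity)
        zify [hq1, h2]; ring
      have hcardu : Fintype.card Fˣ = (p ^ m - 1) * (p ^ m + 1) := by
        rw [Fintype.card_units, hcard2, hqq]
      have huu : (Units.mk0 u hu0) ^ (p ^ m + 1) = 1 := by
        ext
        push_cast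
        exact huq
      obtain ⟨xu, hxu⟩ := aux_cyclic_pow_surj (p ^ m - 1) (p ^ m + 1) hcardu
        (by positivity) (Units.mk0 u hu0) huu
      set x : F := (xu : F) with hxdef
      have hx0 : x ≠ 0 := xu.ne_zero
      have hxpow : x ^ (p ^ m - 1) = u := by
        have h := congrArg (Units.val) hxu
        push_cast at h
        exact h
      have hxq : x ^ (p ^ m) = x * u := by
        calc x ^ (p ^ m) = x ^ (p ^ m - 1) * x := by rw [← pow_succ, Nat.sub_add_cancel hq1]
          _ = x * u := by rw [hxpow, mul_comm]
      have key : μ ^ (p ^ m) * (x ^ (p ^ s) * x) = μ * ((x ^ (p ^ m)) ^ (p ^ s) * x ^ (p ^ m)) := by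
        rw [← hμpow, huμ, hxq]; ring
      have h1 : (x * x ^ (p ^ m)) ^ (p ^ m) = x * x ^ (p ^ m) := by
        rw [mul_pow, hFq x]; ring
      have h2 : (μ * (x ^ (p ^ m) * (x ^ (p ^ m)) ^ (p ^ s)
            + l * (x ^ (p ^ m)) ^ (p ^ s) * x ^ (p ^ m))) ^ (p ^ m)
          = μ * (x ^ (p ^ m) * (x ^ (p ^ m)) ^ (p ^ s)
            + l * (x ^ (p ^ m)) ^ (p ^ s) * x ^ (p ^ m)) := by
        have e1 : x ^ (p ^ m) * (x ^ (p ^ m)) ^ (p ^ s)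
            + l * (x ^ (p ^ m)) ^ (p ^ s) * x ^ (p ^ m)
            = (1 + l) * ((x ^ (p ^ m)) ^ (p ^ s) * x ^ (p ^ m)) := by ring
        have e2 : ((x ^ (p ^ m)) ^ (p ^ s) * x ^ (p ^ m)) ^ (p ^ m) = x ^ (p ^ s) * x := by
          rw [mul_pow, pow_right_comm, hFq x]
        have e3 : ((1 : F) + l) ^ (p ^ m) = 1 + l := by
          rw [hfrob, one_pow, hlL]
        rw [e1, mul_pow, mul_pow, e2, e3]
        linear_combination (1 + l) * key
      rcases C x (x ^ (p ^ m)) h1 h2 with h | h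
      · exact hx0 h
      · exact pow_ne_zero _ hx0 h
  · rintro ⟨hni, hnii⟩ x y h1 h2
    by_contra hcon
    push_neg at hcon
    obtain ⟨hx0, hy0⟩ := hcon
    have h1' : x ^ (p ^ m) * y ^ (p ^ m) = x * y := by rw [← mul_pow, h1]
    have hxq0 : (x : F) ^ (p ^ m) ≠ 0 := pow_ne_zero _ hx0
    by_cases hA0 : x ^ (p ^ m) * y ^ (p ^ s) + l * (x ^ (p ^ m)) ^ (p ^ s) * y = 0
    · -- construct t
      have ht0 : y * (x ^ (p ^ m))⁻¹ ≠ 0 := mul_ne_zero hy0 (inv_ne_zero hxq0)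
      refine hni ⟨y * (x ^ (p ^ m))⁻¹, ht0, ?_, ?_⟩
      · rw [mul_pow, inv_pow, hFq x]
        field_simp
        linear_combination h1'
      · have htσ : (y * (x ^ (p ^ m))⁻¹) ^ (p ^ s) = -l * (y * (x ^ (p ^ m))⁻¹) := by
          rw [mul_pow, inv_pow]
          field_simp
          linear_combination hA0
        have hc : (y * (x ^ (p ^ m))⁻¹) ^ (p ^ s - 1) * (y * (x ^ (p ^ m))⁻¹)
            = -l * (y * (x ^ (p ^ m))⁻¹) := by
          rw [← pow_succ, Nat.sub_add_cancel hσ1, htσ]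
        exact mul_right_cancel₀ ht0 hc
    · -- construct u
      have hAq : (x ^ (p ^ m) * y ^ (p ^ s) + l * (x ^ (p ^ m)) ^ (p ^ s) * y) ^ (p ^ m)
          = x * (y ^ (p ^ m)) ^ (p ^ s) + l * x ^ (p ^ s) * y ^ (p ^ m) := by
        rw [hfrob, mul_pow, mul_pow, mul_pow, hlL, hFq x,
          pow_right_comm y (p ^ s) (p ^ m), pow_right_comm (x ^ (p ^ m)) (p ^ s) (p ^ m), hFq x]
      rw [mul_pow, hAq] at h2
      have e1 : (y ^ (p ^ m)) ^ (p ^ s) * (x ^ (p ^ m)) ^ (p ^ s) = x ^ (p ^ s) * y ^ (p ^ s) := by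
        rw [← mul_pow, mul_comm (y ^ (p ^ m)), h1', mul_pow]
      have key : (x * (y ^ (p ^ m)) ^ (p ^ s) + l * x ^ (p ^ s) * y ^ (p ^ m))
            * ((x ^ (p ^ m)) ^ (p ^ s) * x ^ (p ^ m))
          = (x ^ (p ^ m) * y ^ (p ^ s) + l * (x ^ (p ^ m)) ^ (p ^ s) * y)
            * (x ^ (p ^ s) * x) := by
        linear_combination (x * x ^ (p ^ m)) * e1 + (l * x ^ (p ^ s) * (x ^ (p ^ m)) ^ (p ^ s)) * h1'
      have h3 : (x ^ (p ^ m) * y ^ (p ^ s) + l * (x ^ (p ^ m)) ^ (p ^ s) * y)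
            * (μ ^ (p ^ m) * (x ^ (p ^ s) * x))
          = (x ^ (p ^ m) * y ^ (p ^ s) + l * (x ^ (p ^ m)) ^ (p ^ s) * y)
            * (μ * ((x ^ (p ^ m)) ^ (p ^ s) * x ^ (p ^ m))) := by
        linear_combination (-(μ ^ (p ^ m))) * key + ((x ^ (p ^ m)) ^ (p ^ s) * x ^ (p ^ m)) * h2
      have hmain := mul_left_cancel₀ hA0 h3
      refine hnii ⟨x ^ (p ^ m) * x⁻¹, mul_ne_zero hxq0 (inv_ne_zero hx0), ?_, ?_⟩
      · rw [mul_pow, inv_pow, pow_succ (x ^ (p ^ m)), hFq x, pow_succ x]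
        field_simp
      · have hcancel : (x ^ (p ^ s) * x) * μ ≠ 0 :=
          mul_ne_zero (mul_ne_zero (pow_ne_zero _ hx0) hx0) hμ
        refine mul_right_cancel₀ hcancel ?_
        have euu : (x ^ (p ^ m) * x⁻¹) ^ (p ^ s + 1) * (x ^ (p ^ s) * x)
            = (x ^ (p ^ m)) ^ (p ^ s) * x ^ (p ^ m) := by
          rw [mul_pow, inv_pow, pow_succ x]
          field_simp
          ring
        calc μ ^ (p ^ m - 1) * ((x ^ (p ^ s) * x) * μ)
            = μ ^ (p ^ m) * (x ^ (p ^ s) * x) := by rw [← hμpow]; ring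
          _ = μ * ((x ^ (p ^ m)) ^ (p ^ s) * x ^ (p ^ m)) := hmain
          _ = μ * ((x ^ (p ^ m) * x⁻¹) ^ (p ^ s + 1) * (x ^ (p ^ s) * x)) := by rw [euu]
          _ = (x ^ (p ^ m) * x⁻¹) ^ (p ^ s + 1) * ((x ^ (p ^ s) * x) * μ) := by ring
end

section
/- Let p be an odd prime, L = F_{p^m}, σ = p^s with 0 < s < m, l, n, N ∈ L* and v ∈ L, and let * denote the product X(p,m,s,v,l,n,N) on L × L. Then * has no zero divisors, i.e. (a,b)*(c,d) = (0,0) implies (a,b) = (0,0) or (c,d) = (0,0) (so X(p,m,s,v,l,n,N) is a presemifield), if and only if both: (i) −l ∉ L*^{σ−1}, and (ii) the polynomial t^{σ+1} − v t^σ − (v/N) t + 1/(nN) has no root t ∈ L. -/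
/-- The first coordinate of the product `X(p,m,s,v,l,n,N)`. -/
def Xh {L : Type*} [Field L] (σ : ℕ) (l n N v a b c d : L) : L :=
  (a * c ^ σ - n * N * b * d ^ σ) + l * (a ^ σ * c - n * N * b ^ σ * d)
    + n * v * ((N * a * d ^ σ - b * c ^ σ) + l * (a ^ σ * d - N * b ^ σ * c))

/-- The product `X(p,m,s,v,l,n,N)` on `L × L`. -/
def Xmul {L : Type*} [Field L] (σ : ℕ) (l n N v : L) (x y : L × L) : L × L :=
  (Xh σ l n N v x.1 x.2 y.1 y.2, x.1 * y.2 + x.2 * y.1)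

lemma Xkey {L : Type*} [Field L] (q : ℕ) (l n N v a b c d : L)
    (had : a * d + b * c = 0) (hadq : a ^ q * d ^ q + b ^ q * c ^ q = 0) :
    a ^ (q + 1) * Xh q l n N v a b c d =
      (a ^ (q + 1) + n * N * b ^ (q + 1) - n * v * a ^ q * b - n * v * N * a * b ^ q)
        * (a * c ^ q + l * a ^ q * c) := by
  unfold Xh
  linear_combination (n*v*l*a^q*a^q - l*n*N*a^q*b^q) * had + (n*v*N*a^2 - n*N*a*b) * hadq

lemma Xaux1 {L : Type*} [Field L] (q : ℕ) (hq : 1 ≤ q) (l t : L) (ht : t ≠ 0)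
    (h : t ^ q + l * t = 0) : t ^ (q - 1) = -l := by
  have hq' : q = (q - 1) + 1 := by omega
  rw [hq', pow_succ] at h
  have h2 : (t ^ (q - 1) + l) * t = 0 := by linear_combination h
  rcases mul_eq_zero.1 h2 with h' | h'
  · exact eq_neg_of_add_eq_zero_left h'
  · exact absurd h' ht

/-- From `b*d^q + l*b^q*d = 0` with `b, d ≠ 0`, get a witness for `-l ∈ L*^(q-1)`. -/
lemma Xaux2 {L : Type*} [Field L] (q : ℕ) (hq : 1 ≤ q) (l b d : L) (hb : b ≠ 0) (hd : d ≠ 0)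
    (h : b * d ^ q + l * b ^ q * d = 0) : ∃ t : L, t ≠ 0 ∧ t ^ (q - 1) = -l := by
  have ht : d / b ≠ 0 := div_ne_zero hd hb
  refine ⟨d / b, ht, Xaux1 q hq l _ ht ?_⟩
  rw [div_pow, mul_div_assoc', div_add_div _ _ (pow_ne_zero q hb) hb, div_eq_zero_iff]
  left
  linear_combination h

/-- Theorem 6.1: `X(p,m,s,v,l,n,N)` is a presemifield iff `-l ∉ L*^(σ-1)` and the
polynomial `t^(σ+1) - v t^σ - (v/N) t + 1/(nN)` has no root in `L`. -/
theorem X_family_presemifield_iff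
    (p m s : ℕ) (hp : p.Prime) (hodd : Odd p) (hs : 0 < s) (hsm : s < m)
    (L : Type*) [Field L] [Fintype L] (hcard : Fintype.card L = p ^ m)
    (l n N : L) (hl : l ≠ 0) (hn : n ≠ 0) (hN : N ≠ 0) (v : L) :
    (∀ x y : L × L, Xmul (p ^ s) l n N v x y = 0 → x = 0 ∨ y = 0) ↔
      ((¬ ∃ t : L, t ≠ 0 ∧ t ^ (p ^ s - 1) = -l) ∧
        ∀ t : L, t ^ (p ^ s + 1) - v * t ^ (p ^ s) - (v / N) * t + 1 / (n * N) ≠ 0) := by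
  set q : ℕ := p ^ s with hqdef
  have hq1 : 1 ≤ q := Nat.one_le_pow _ _ hp.pos
  have hq0 : q ≠ 0 := by omega
  have hqodd : Odd q := hodd.pow
  constructor
  · intro hzd
    constructor
    · rintro ⟨t, ht0, ht⟩
      have htq : t ^ q = -l * t := by
        have h' : t ^ q = t ^ (q - 1) * t := by
          rw [← pow_succ]; congr 1; omega
        rw [h', ht]
      have hXh : Xh q l n N v 1 0 t 0 = 0 := by
        unfold Xh
        simp only [zero_pow hq0]
        linear_combination htq
      have := hzd (1, 0) (t, 0) (by
        unfold Xmul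
        simp only [Prod.mk_eq_zero]
        exact ⟨hXh, by ring⟩)
      rcases this with h | h
      · exact one_ne_zero (congrArg Prod.fst h)
      · exact ht0 (congrArg Prod.fst h)
    · intro t hroot
      have h := hroot
      field_simp at h
      have hP : 1 + n * N * t ^ (q + 1) - n * v * t - n * v * N * t ^ q = 0 := by
        apply mul_left_cancel₀ hN
        linear_combination N * h
      have hXh : Xh q l n N v 1 t 1 (-t) = 0 := by
        have hneg : (-t) ^ q = -(t ^ q) := hqodd.neg_pow t
        unfold Xh
        simp only [hneg]
        linear_combination (1 + l) * hP
      have := hzd (1, t) (1, -t) (by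
        unfold Xmul
        simp only [Prod.mk_eq_zero]
        exact ⟨hXh, by ring⟩)
      rcases this with h | h
      · exact one_ne_zero (congrArg Prod.fst h)
      · exact one_ne_zero (congrArg Prod.fst h)
  · rintro ⟨h1, h2⟩ ⟨a, b⟩ ⟨c, d⟩ hxy
    unfold Xmul at hxy
    simp only [Prod.mk_eq_zero] at hxy
    obtain ⟨hh, had⟩ := hxy
    by_contra hcon
    push_neg at hcon
    obtain ⟨hx, hy⟩ := hcon
    simp only [Ne, Prod.mk_eq_zero, not_and_or] at hx hy
    by_cases ha : a = 0
    · -- a = 0, so b ≠ 0, c = 0, d ≠ 0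
      have hb : b ≠ 0 := hx.resolve_left (not_not_intro ha)
      have hc : c = 0 := by
        have hbc : b * c = 0 := by rw [ha] at had; linear_combination had
        exact (mul_eq_zero.1 hbc).resolve_left hb
      have hd : d ≠ 0 := hy.resolve_left (not_not_intro hc)
      apply h1
      apply Xaux2 q hq1 l b d hb hd
      have hfac : -(n * N) * (b * d ^ q + l * b ^ q * d) = 0 := by
        unfold Xh at hh
        rw [ha, hc] at hh
        simp only [zero_pow hq0] at hh
        linear_combination hh
      rcases mul_eq_zero.1 hfac with h' | h'
      · exact absurd (neg_eq_zero.1 h') (mul_ne_zero hn hN)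
      · exact h'
    · -- a ≠ 0
      have hc : c ≠ 0 := by
        intro hc0
        have hd0 : d = 0 := by
          have had' : a * d = 0 := by rw [hc0] at had; linear_combination had
          exact (mul_eq_zero.1 had').resolve_left ha
        rcases hy with h | h
        · exact h hc0
        · exact h hd0
      by_cases hb : b = 0
      · -- b = 0 hence d = 0, equation a c^q + l a^q c = 0
        have hd0 : d = 0 := by
          have had' : a * d = 0 := by rw [hb] at had; linear_combination had
          exact (mul_eq_zero.1 had').resolve_left ha
        apply h1
        apply Xaux2 q hq1 l a c ha hc
        unfold Xh at hh
        rw [hb, hd0] at hh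
        simp only [zero_pow hq0] at hh
        linear_combination hh
      · -- main case: a,b,c all nonzero
        have hadq : a ^ q * d ^ q + b ^ q * c ^ q = 0 := by
          have h1' : a * d = -(b * c) := by linear_combination had
          have h2' : (a * d) ^ q = (-(b * c)) ^ q := by rw [h1']
          rw [mul_pow, hqodd.neg_pow, mul_pow] at h2'
          linear_combination h2'
        have hkey := Xkey q l n N v a b c d had hadq
        rw [hh, mul_zero] at hkey
        rcases mul_eq_zero.1 hkey.symm with hP | hQ
        · -- P = 0 : root of the polynomial
          apply h2 (b / a)
          have haq : a ^ (q + 1) ≠ 0 := pow_ne_zero _ ha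
          rw [div_pow, div_pow]
          field_simp
          linear_combination a ^ (q + 1) * hP
        · -- Q = 0 : (c/a)^(q-1) = -l
          apply h1
          apply Xaux2 q hq1 l a c ha hc
          linear_combination hQ
end

section
/- Let p be an odd prime, L = F_{p^m}, σ = p^s with 0 < s < m, and suppose X(p,m,s,v,l,n,N) is a presemifield (l,n,N ∈ L*, v ∈ L). Then for any k_b, k_c ∈ L*, the products X(p,m,s,v,l,n,N) and X(p,m,s, v/k_b, l/k_c^{σ−1}, n k_b², N k_b^{σ−1}) are isotopic; and both are isotopic to X(p,m,m−s, v/N, 1/l, n N², 1/N), the analogous product in which σ = p^s is replaced by τ = p^{m−s}. In particular all of these are presemifields. -/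
/-- Products `mul, mul'` are isotopic: `mul' (A x) (B y) = C (mul x y)` for additive
bijections `A, B, C`. -/
def Isotopic {α : Type*} [AddCommGroup α] (mul mul' : α → α → α) : Prop :=
  ∃ A B C : α ≃+ α, ∀ x y : α, mul' (A x) (B y) = C (mul x y)

/-- Multiplication by a nonzero field element, as an additive equivalence. -/
def mulLeftAddEquiv {L : Type*} [Field L] (c : L) (hc : c ≠ 0) : L ≃+ L where
  toFun x := c * x
  invFun x := c⁻¹ * x
  left_inv x := by field_simp
  right_inv x := by field_simp
  map_add' := mul_add c

@[simp] lemma mulLeftAddEquiv_apply {L : Type*} [Field L] (c : L) (hc : c ≠ 0) (x : L) :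
    mulLeftAddEquiv c hc x = c * x := rfl

/-- The `p^k`-power Frobenius map is injective on a field of characteristic `p`. -/
lemma pow_char_pow_injective (L : Type*) [Field L] (p k : ℕ) [Fact p.Prime] [CharP L p] :
    Function.Injective (fun x : L => x ^ p ^ k) := by
  intro a b hab
  simp only at hab
  have h0 : (a - b) ^ p ^ k = 0 := by rw [sub_pow_char_pow, hab, sub_self]
  have := pow_eq_zero_iff (pow_ne_zero k (Fact.out : p.Prime).ne_zero) |>.mp h0
  exact sub_eq_zero.mp this

/-- The `p^k`-power Frobenius map as an additive equivalence of a finite field. -/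
noncomputable def powAddEquiv (L : Type*) [Field L] [Fintype L] (p k : ℕ) [Fact p.Prime]
    [CharP L p] : L ≃+ L where
  toFun x := x ^ p ^ k
  invFun := Function.invFun (fun x : L => x ^ p ^ k)
  left_inv := Function.leftInverse_invFun (pow_char_pow_injective L p k)
  right_inv := Function.rightInverse_invFun
    ((Finite.injective_iff_surjective).mp (pow_char_pow_injective L p k))
  map_add' a b := add_pow_char_pow a b p k

@[simp] lemma powAddEquiv_apply (L : Type*) [Field L] [Fintype L] (p k : ℕ) [Fact p.Prime]
    [CharP L p] (x : L) : powAddEquiv L p k x = x ^ p ^ k := rfl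

/-- A product of two additive equivalences on the coordinates of `L × L`. -/
def prodAddEquiv {L : Type*} [AddCommGroup L] (f g : L ≃+ L) : (L × L) ≃+ (L × L) where
  toFun x := (f x.1, g x.2)
  invFun x := (f.symm x.1, g.symm x.2)
  left_inv x := by simp
  right_inv x := by simp
  map_add' x y := by simp [Prod.ext_iff]

@[simp] lemma prodAddEquiv_apply {L : Type*} [AddCommGroup L] (f g : L ≃+ L) (x : L × L) :
    prodAddEquiv f g x = (f x.1, g x.2) := rfl

/-- Having no zero divisors transfers along isotopy. -/
lemma Isotopic.no_zero_divisors {α : Type*} [AddCommGroup α] {mul mul' : α → α → α}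
    (h : Isotopic mul mul') (hpre : ∀ x y, mul x y = 0 → x = 0 ∨ y = 0) :
    ∀ x y, mul' x y = 0 → x = 0 ∨ y = 0 := by
  obtain ⟨A, B, C, hABC⟩ := h
  intro x y hxy
  have hkey := hABC (A.symm x) (B.symm y)
  rw [A.apply_symm_apply, B.apply_symm_apply, hxy] at hkey
  have h0 : mul (A.symm x) (B.symm y) = 0 := (AddEquiv.map_eq_zero_iff C).mp hkey.symm
  rcases hpre _ _ h0 with h1 | h1
  · exact Or.inl ((AddEquiv.map_eq_zero_iff A.symm).mp h1)
  · exact Or.inr ((AddEquiv.map_eq_zero_iff B.symm).mp h1)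

/-- Lemma 6.3. -/
theorem X_family_isotopies
    (p m s : ℕ) (hp : p.Prime) (hodd : Odd p) (hs : 0 < s) (hsm : s < m)
    (L : Type*) [Field L] [Fintype L] (hcard : Fintype.card L = p ^ m)
    (l n N : L) (hl : l ≠ 0) (hn : n ≠ 0) (hN : N ≠ 0) (v : L)
    (hpre : ∀ x y : L × L, Xmul (p ^ s) l n N v x y = 0 → x = 0 ∨ y = 0)
    (kb kc : L) (hkb : kb ≠ 0) (hkc : kc ≠ 0) :
    Isotopic (Xmul (p ^ s) l n N v)
      (Xmul (p ^ s) (l / kc ^ (p ^ s - 1)) (n * kb ^ 2) (N * kb ^ (p ^ s - 1)) (v / kb)) ∧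
    Isotopic (Xmul (p ^ s) l n N v)
      (Xmul (p ^ (m - s)) (1 / l) (n * N ^ 2) (1 / N) (v / N)) ∧
    (∀ x y : L × L,
      Xmul (p ^ s) (l / kc ^ (p ^ s - 1)) (n * kb ^ 2) (N * kb ^ (p ^ s - 1)) (v / kb) x y = 0 →
        x = 0 ∨ y = 0) ∧
    (∀ x y : L × L,
      Xmul (p ^ (m - s)) (1 / l) (n * N ^ 2) (1 / N) (v / N) x y = 0 → x = 0 ∨ y = 0) := by
  haveI : Fact p.Prime := ⟨hp⟩
  -- the characteristic of `L` is `p`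
  haveI hchar : CharP L p := by
    haveI := ringChar.charP L
    obtain ⟨n0, hrprime, hcard'⟩ := FiniteField.card L (ringChar L)
    have hpm : p ^ m = ringChar L ^ (n0 : ℕ) := by rw [← hcard, hcard']
    have hdvd : p ∣ ringChar L ^ (n0 : ℕ) := hpm ▸ dvd_pow_self p (by omega : m ≠ 0)
    have hpr : p = ringChar L :=
      (Nat.prime_dvd_prime_iff_eq hp hrprime).mp (hp.dvd_of_dvd_pow hdvd)
    exact hpr ▸ ringChar.charP L
  -- the key Frobenius identity: (x^{p^s})^{p^{m-s}} = x
  have hst : ∀ x : L, (x ^ p ^ s) ^ p ^ (m - s) = x := by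
    intro x
    rw [← pow_mul, ← pow_add, Nat.add_sub_cancel' hsm.le, ← hcard]
    exact FiniteField.pow_card x
  have hone_le : 1 ≤ p ^ s := Nat.one_le_pow s p hp.pos
  have hkbp : kb ^ p ^ s = kb ^ (p ^ s - 1) * kb := by
    rw [← pow_succ]
    congr 1
    omega
  have hkcp : kc ^ p ^ s = kc ^ (p ^ s - 1) * kc := by
    rw [← pow_succ]
    congr 1
    omega
  have iso1 : Isotopic (Xmul (p ^ s) l n N v)
      (Xmul (p ^ s) (l / kc ^ (p ^ s - 1)) (n * kb ^ 2) (N * kb ^ (p ^ s - 1)) (v / kb)) := by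
    refine ⟨prodAddEquiv (mulLeftAddEquiv (kb * kc) (mul_ne_zero hkb hkc))
        (mulLeftAddEquiv kc hkc),
      prodAddEquiv (mulLeftAddEquiv kb hkb) (AddEquiv.refl L),
      prodAddEquiv (mulLeftAddEquiv (kb ^ 2 * kb ^ (p ^ s - 1) * kc)
          (mul_ne_zero (mul_ne_zero (pow_ne_zero _ hkb) (pow_ne_zero _ hkb)) hkc))
        (mulLeftAddEquiv (kb * kc) (mul_ne_zero hkb hkc)), ?_⟩
    rintro ⟨a, b⟩ ⟨c, d⟩
    simp only [Xmul, prodAddEquiv_apply, mulLeftAddEquiv_apply, AddEquiv.refl_apply,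
      Prod.mk.injEq]
    constructor
    · simp only [Xh, mul_pow]
      rw [hkbp, hkcp]
      have hkb1 : kb ^ (p ^ s - 1) ≠ 0 := pow_ne_zero _ hkb
      have hkc1 : kc ^ (p ^ s - 1) ≠ 0 := pow_ne_zero _ hkc
      generalize kb ^ (p ^ s - 1) = KB1 at hkb1 ⊢
      generalize kc ^ (p ^ s - 1) = KC1 at hkc1 ⊢
      field_simp
    · ring
  have iso2 : Isotopic (Xmul (p ^ s) l n N v)
      (Xmul (p ^ (m - s)) (1 / l) (n * N ^ 2) (1 / N) (v / N)) := by
    refine ⟨prodAddEquiv (powAddEquiv L p s) (powAddEquiv L p s),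
      prodAddEquiv (powAddEquiv L p s) (powAddEquiv L p s),
      prodAddEquiv (mulLeftAddEquiv l⁻¹ (inv_ne_zero hl)) (powAddEquiv L p s), ?_⟩
    rintro ⟨a, b⟩ ⟨c, d⟩
    simp only [Xmul, prodAddEquiv_apply, mulLeftAddEquiv_apply, powAddEquiv_apply,
      Prod.mk.injEq]
    constructor
    · simp only [Xh, hst]
      conv_rhs => rw [mul_add]
      congr 1
      · field_simp
        ring
      · field_simp
        ring
    · rw [add_pow_char_pow, mul_pow, mul_pow]
  exact ⟨iso1, iso2, iso1.no_zero_divisors hpre, iso2.no_zero_divisors hpre⟩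
end

section
/- Let p be an odd prime, L = F_{p^m}, σ = p^s with 0 < s < m, and suppose X(p,m,s,v,l,n,N) is a presemifield (l,n,N ∈ L*, v ∈ L). Then X(p,m,s,v,l,n,N) is isotopic to at least one of: (i) a product B(p,m,s,l',n',N') = X(p,m,s,1,l',n',N') with l',n',N' ∈ L* such that −l' ∉ L*^{σ−1} and x^{σ+1} + (1 − 1/N')x + (1/n' − 1)/N' ≠ 0 for all x ∈ L; or (ii) a product C(p,m,s,l',R') = X(p,m,s,0,l',n',N') with l',n',N' ∈ L* such that −l' ∉ L*^{σ−1} and R' := −n'N' ∉ L*^{σ+1}. -/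
/-- Auxiliary: scaling of the second coordinate is an additive equivalence. -/
noncomputable def sndScale {L : Type*} [Field L] (v : L) (hv : v ≠ 0) : L × L ≃+ L × L where
  toFun z := (z.1, v * z.2)
  invFun z := (z.1, v⁻¹ * z.2)
  left_inv z := by simp [inv_mul_cancel_left₀ hv]
  right_inv z := by simp [mul_inv_cancel_left₀ hv]
  map_add' z w := by
    simp only [Prod.fst_add, Prod.snd_add, Prod.mk_add_mk, Prod.mk.injEq]
    exact ⟨by trivial, by ring⟩

/-- Key scaling identity for `Xh`. -/
lemma Xh_scale {L : Type*} [Field L] (k : ℕ) (l n N v a b c d : L) :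
    Xh (k + 1) l n N v a (v * b) c (v * d)
      = Xh (k + 1) l (n * v ^ 2) (N * v ^ k) 1 a b c d := by
  unfold Xh; ring

/-- `h` on pairs `(1,b)`, `(1,-b)` with `v = 1`. -/
lemma Xh_oneb {L : Type*} [Field L] (k : ℕ) (hodd : Odd (k + 1)) (l n N b : L) :
    Xh (k + 1) l n N 1 1 b 1 (-b)
      = (1 + l) * (n * N * (b ^ (k + 1) * b) - n * N * b ^ (k + 1) - n * b + 1) := by
  unfold Xh
  rw [hodd.neg_pow]
  ring

/-- Corollary 6.4: every presemifield `X(p,m,s,v,l,n,N)` is isotopic to a `B`-family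
member (`v = 1`) or a `C`-family member (`v = 0`) with the stated normalizations. -/
theorem X_family_isotopic_to_B_or_C
    (p m s : ℕ) (hp : p.Prime) (hodd : Odd p) (hs : 0 < s) (hsm : s < m)
    (L : Type*) [Field L] [Fintype L] (hcard : Fintype.card L = p ^ m)
    (l n N : L) (hl : l ≠ 0) (hn : n ≠ 0) (hN : N ≠ 0) (v : L)
    (hpre : ∀ x y : L × L, Xmul (p ^ s) l n N v x y = 0 → x = 0 ∨ y = 0) :
    ∃ l' n' N' : L, l' ≠ 0 ∧ n' ≠ 0 ∧ N' ≠ 0 ∧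
      (((¬ ∃ t : L, t ≠ 0 ∧ t ^ (p ^ s - 1) = -l') ∧
          (∀ x : L, x ^ (p ^ s + 1) + (1 - 1 / N') * x + (1 / n' - 1) / N' ≠ 0) ∧
          Isotopic (Xmul (p ^ s) l n N v) (Xmul (p ^ s) l' n' N' 1)) ∨
        ((¬ ∃ t : L, t ≠ 0 ∧ t ^ (p ^ s - 1) = -l') ∧
          (¬ ∃ t : L, t ≠ 0 ∧ t ^ (p ^ s + 1) = -(n' * N')) ∧
          Isotopic (Xmul (p ^ s) l n N v) (Xmul (p ^ s) l' n' N' 0))) := by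
  have hσ1 : 1 ≤ p ^ s := Nat.one_le_pow _ _ hp.pos
  have hσodd : Odd (p ^ s) := hodd.pow
  set k : ℕ := p ^ s - 1 with hkdef
  have hk : p ^ s = k + 1 := by omega
  -- characteristic
  have hm : m ≠ 0 := by omega
  have hpL : (p : L) = 0 := by
    have h := FiniteField.cast_card_eq_zero L
    rw [hcard] at h
    push_cast at h
    exact pow_eq_zero_iff hm |>.mp h
  haveI : CharP L (ringChar L) := ringChar.charP L
  have hring : ringChar L = p := by
    have hdvd : ringChar L ∣ p := (CharP.cast_eq_zero_iff L (ringChar L) p).mp hpL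
    rcases (Nat.dvd_prime hp).mp hdvd with h1 | h1
    · exfalso
      have : (1 : ℕ) ∣ 1 := dvd_refl 1
      have h0 : ((1 : ℕ) : L) = 0 := by
        rw [← h1]; exact CharP.cast_eq_zero L (ringChar L)
      simp at h0
    · exact h1
  haveI : CharP L p := hring ▸ ringChar.charP L
  haveI : Fact p.Prime := ⟨hp⟩
  have hfrob : ∀ x : L, (x + 1) ^ p ^ s = x ^ p ^ s + 1 := by
    intro x
    have := add_pow_char_pow (R := L) (p := p) (n := s) (x := x) (y := 1)
    simpa using this
  -- the first normalization condition, valid for the original parameters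
  have condA : ¬ ∃ t : L, t ≠ 0 ∧ t ^ (p ^ s - 1) = -l := by
    rintro ⟨t, ht0, ht⟩
    have ht' : t ^ (p ^ s) = -l * t := by
      conv_lhs => rw [hk]
      rw [pow_succ, hkdef, ht]
    have hfst : Xh (p ^ s) l n N v 1 0 t 0 = 0 := by
      unfold Xh
      rw [zero_pow (by omega : p ^ s ≠ 0), ht']
      ring
    have hz : Xmul (p ^ s) l n N v (1, 0) (t, 0) = 0 := by
      unfold Xmul
      simp only [Prod.mk_eq_zero]
      exact ⟨hfst, by ring⟩
    rcases hpre _ _ hz with h | h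
    · exact one_ne_zero (congrArg Prod.fst h)
    · exact ht0 (congrArg Prod.fst h)
  have hl1 : (1 : L) + l ≠ 0 := by
    intro h
    exact condA ⟨1, one_ne_zero, by rw [one_pow]; linear_combination h⟩
  by_cases hv : v = 0
  · -- C family: keep the parameters
    subst hv
    refine ⟨l, n, N, hl, hn, hN, Or.inr ⟨condA, ?_, ?_⟩⟩
    · rintro ⟨t, ht0, ht⟩
      have ht' : t ^ (p ^ s) * t = -(n * N) := by
        rw [← pow_succ, ht]
      have hfst : Xh (p ^ s) l n N 0 t 1 (-t) 1 = 0 := by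
        unfold Xh
        rw [hσodd.neg_pow]
        linear_combination (-1 - l) * ht'
      have hz : Xmul (p ^ s) l n N 0 (t, 1) (-t, 1) = 0 := by
        unfold Xmul
        simp only [Prod.mk_eq_zero]
        exact ⟨hfst, by ring⟩
      rcases hpre _ _ hz with h | h
      · exact one_ne_zero (congrArg Prod.snd h)
      · exact one_ne_zero (congrArg Prod.snd h)
    · exact ⟨AddEquiv.refl _, AddEquiv.refl _, AddEquiv.refl _, fun x y => rfl⟩
  · -- B family: scale the parameters
    have hvinv : v⁻¹ ≠ 0 := inv_ne_zero hv
    set n' : L := n * v ^ 2 with hn'def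
    set N' : L := N * v ^ k with hN'def
    have hn' : n' ≠ 0 := mul_ne_zero hn (pow_ne_zero _ hv)
    have hN' : N' ≠ 0 := mul_ne_zero hN (pow_ne_zero _ hv)
    have hkodd : Odd (k + 1) := hk ▸ hσodd
    -- the isotopy
    have hiso : Isotopic (Xmul (p ^ s) l n N v) (Xmul (p ^ s) l n' N' 1) := by
      refine ⟨sndScale v⁻¹ hvinv, sndScale v⁻¹ hvinv, sndScale v⁻¹ hvinv, fun x y => ?_⟩
      show ((Xh (p ^ s) l n' N' 1 x.1 (v⁻¹ * x.2) y.1 (v⁻¹ * y.2) : L), _) = _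
      have hfst : Xh (p ^ s) l n' N' 1 x.1 (v⁻¹ * x.2) y.1 (v⁻¹ * y.2)
          = Xh (p ^ s) l n N v x.1 x.2 y.1 y.2 := by
        rw [hk]
        have := Xh_scale k l n N v x.1 (v⁻¹ * x.2) y.1 (v⁻¹ * y.2)
        rw [mul_inv_cancel_left₀ hv, mul_inv_cancel_left₀ hv] at this
        exact this.symm
      refine Prod.ext hfst ?_
      show x.1 * (v⁻¹ * y.2) + v⁻¹ * x.2 * y.1 = v⁻¹ * (x.1 * y.2 + x.2 * y.1)
      ring
    refine ⟨l, n', N', hl, hn', hN', Or.inl ⟨condA, ?_, hiso⟩⟩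
    intro x hx
    -- clear denominators in hx
    have hx' : n' * N' * (x ^ (p ^ s) * x) + n' * (N' - 1) * x + (1 - n') = 0 := by
      field_simp at hx
      rw [pow_succ] at hx
      have h3 : N' * (n' * N' * (x ^ p ^ s * x) + n' * (N' - 1) * x + (1 - n')) = 0 := by
        linear_combination N' * hx
      rcases mul_eq_zero.mp h3 with h | h
      · exact absurd h hN'
      · exact h
    set b : L := x + 1 with hbdef
    have hfb : b ^ (p ^ s) = x ^ (p ^ s) + 1 := hfrob x
    have hB : Xh (p ^ s) l n' N' 1 1 b 1 (-b) = 0 := by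
      rw [hk]
      rw [Xh_oneb k hkodd l n' N' b]
      rw [← hk, hfb, hbdef]
      linear_combination (1 + l) * hx'
    have hfst : Xh (p ^ s) l n N v 1 (v * b) 1 (-(v * b)) = 0 := by
      have hneg : -(v * b) = v * (-b) := by ring
      rw [hneg, hk, Xh_scale k l n N v 1 b 1 (-b), ← hk, ← hn'def, ← hN'def]
      exact hB
    have hz : Xmul (p ^ s) l n N v (1, v * b) (1, -(v * b)) = 0 := by
      unfold Xmul
      simp only [Prod.mk_eq_zero]
      exact ⟨hfst, by ring⟩
    rcases hpre _ _ hz with h | h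
    · exact one_ne_zero (congrArg Prod.fst h)
    · exact one_ne_zero (congrArg Prod.fst h)
end

section
/- Let p be an odd prime and s, m positive integers, and write v₂ for the 2-adic valuation on positive integers. If v₂(s) ≠ v₂(m) then gcd(p^m + 1, p^s + 1) = 2, whereas if v₂(s) = v₂(m) then gcd(p^m + 1, p^s + 1) = p^{gcd(m,s)} + 1. -/
/-- If `g` divides `p^(2d) - 1` and `(p^d)^t + 1` with `t` odd, then `g ∣ p^d + 1`. -/
lemma aux_key_dvd (p d t g : ℕ) (hp : 1 ≤ p) (ht : Odd t)
    (hg2 : g ∣ p ^ (2 * d) - 1) (hgt : g ∣ (p ^ d) ^ t + 1) : g ∣ p ^ d + 1 := by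
  set x := p ^ d with hx
  have hx1 : 1 ≤ x := Nat.one_le_pow _ _ hp
  obtain ⟨u, hu⟩ := ht
  have h2d : p ^ (2 * d) = x ^ 2 := by rw [hx, ← pow_mul, mul_comm]
  have hdvd1 : x ^ 2 - 1 ∣ x ^ (2 * u) - 1 := by
    have := Nat.sub_dvd_pow_sub_pow (x ^ 2) 1 u
    simpa [← pow_mul, one_pow] using this
  have hgx : g ∣ x ^ t - x := by
    have : x ^ t - x = x * (x ^ (2 * u) - 1) := by
      rw [hu, Nat.mul_sub, mul_one, ← pow_succ']
    rw [this]
    exact Dvd.dvd.mul_left ((h2d ▸ hg2).trans hdvd1) x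
  have hle : x ≤ x ^ t := Nat.le_self_pow (by omega) x
  have : (x ^ t + 1) - (x ^ t - x) = x + 1 := by omega
  calc g ∣ (x ^ t + 1) - (x ^ t - x) := Nat.dvd_sub hgt hgx
    _ = x + 1 := this

/-- If `g` divides `p^m + 1` and `p^s + 1`, then `g` divides `p^(2·gcd(m,s)) - 1`. -/
lemma aux_ord_dvd (p g m s : ℕ) (hp : 1 ≤ p)
    (h1 : g ∣ p ^ m + 1) (h2 : g ∣ p ^ s + 1) : g ∣ p ^ (2 * Nat.gcd m s) - 1 := by
  have key : ∀ n : ℕ, g ∣ p ^ n + 1 → ((p : ZMod g)) ^ (2 * n) = 1 := by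
    intro n hn
    have hd : g ∣ p ^ (2 * n) - 1 := by
      have : p ^ (2 * n) - 1 = (p ^ n + 1) * (p ^ n - 1) := by
        rw [mul_comm 2 n, pow_mul, ← one_pow 2, Nat.sq_sub_sq, one_pow]
      rw [this]
      exact Dvd.dvd.mul_right hn _
    have hge : 1 ≤ p ^ (2 * n) := Nat.one_le_pow _ _ hp
    have := (ZMod.natCast_eq_zero_iff _ g).mpr hd
    rw [Nat.cast_sub hge] at this
    push_cast at this
    linear_combination this
  have hm1 := key m h1
  have hs1 := key s h2
  have hord : orderOf ((p : ZMod g)) ∣ 2 * Nat.gcd m s := by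
    rw [← Nat.gcd_mul_left]
    exact Nat.dvd_gcd (orderOf_dvd_of_pow_eq_one hm1) (orderOf_dvd_of_pow_eq_one hs1)
  have hpow : ((p : ZMod g)) ^ (2 * Nat.gcd m s) = 1 :=
    orderOf_dvd_iff_pow_eq_one.mp hord
  have hge : 1 ≤ p ^ (2 * Nat.gcd m s) := Nat.one_le_pow _ _ hp
  rw [← ZMod.natCast_eq_zero_iff, Nat.cast_sub hge]
  push_cast
  linear_combination hpow

/-- If `v₂(m) < v₂(s)` then the gcd is 2. -/
lemma aux_lt_case (p s m : ℕ) (hp : p.Prime) (hodd : Odd p) (hs : 0 < s) (hm : 0 < m)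
    (hlt : padicValNat 2 m < padicValNat 2 s) :
    Nat.gcd (p ^ m + 1) (p ^ s + 1) = 2 := by
  haveI : Fact (Nat.Prime 2) := ⟨Nat.prime_two⟩
  have hp1 : 1 ≤ p := hp.one_lt.le.trans' (by norm_num)
  set d := Nat.gcd m s with hd
  have hd0 : 0 < d := Nat.gcd_pos_of_pos_left _ hm
  obtain ⟨k, hk⟩ := Nat.gcd_dvd_left m s
  obtain ⟨l, hl⟩ := Nat.gcd_dvd_right m s
  have hk0 : k ≠ 0 := by rintro rfl; omega
  have hl0 : l ≠ 0 := by rintro rfl; omega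
  have hvm : padicValNat 2 m = padicValNat 2 d + padicValNat 2 k := by
    rw [hk]; exact padicValNat.mul (by omega) hk0
  have hvs : padicValNat 2 s = padicValNat 2 d + padicValNat 2 l := by
    rw [hl]; exact padicValNat.mul (by omega) hl0
  have h2l : 2 ∣ l := dvd_of_one_le_padicValNat (by omega)
  obtain ⟨l', rfl⟩ := h2l
  have h2ds : 2 * d ∣ s := ⟨l', by rw [hl]; ring⟩
  set g := Nat.gcd (p ^ m + 1) (p ^ s + 1) with hg
  have hg1 : g ∣ p ^ m + 1 := Nat.gcd_dvd_left _ _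
  have hg2 : g ∣ p ^ s + 1 := Nat.gcd_dvd_right _ _
  have hgd : g ∣ p ^ (2 * d) - 1 := aux_ord_dvd p g m s hp1 hg1 hg2
  -- p^(2d) - 1 ∣ p^s - 1
  obtain ⟨e, he⟩ := h2ds
  have hds : p ^ (2 * d) - 1 ∣ p ^ s - 1 := by
    have := Nat.sub_dvd_pow_sub_pow (p ^ (2 * d)) 1 e
    simpa [← pow_mul, ← he, one_pow] using this
  have hgs : g ∣ p ^ s - 1 := hgd.trans hds
  have hps1 : 1 ≤ p ^ s := Nat.one_le_pow _ _ hp1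
  have hg2' : g ∣ 2 := by
    have : (p ^ s + 1) - (p ^ s - 1) = 2 := by omega
    calc g ∣ (p ^ s + 1) - (p ^ s - 1) := Nat.dvd_sub hg2 hgs
      _ = 2 := this
  have h2g : 2 ∣ g :=
    Nat.dvd_gcd (hodd.pow.add_one).two_dvd (hodd.pow.add_one).two_dvd
  exact Nat.dvd_antisymm hg2' h2g

/-- Lemma 7.3: for odd `p`, `gcd(p^m+1, p^s+1) = 2` if `v₂(s) ≠ v₂(m)`, and
`gcd(p^m+1, p^s+1) = p^gcd(m,s) + 1` if `v₂(s) = v₂(m)`. -/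
theorem gcd_pow_add_one
    (p s m : ℕ) (hp : p.Prime) (hodd : Odd p) (hs : 0 < s) (hm : 0 < m) :
    (padicValNat 2 s ≠ padicValNat 2 m → Nat.gcd (p ^ m + 1) (p ^ s + 1) = 2) ∧
    (padicValNat 2 s = padicValNat 2 m →
      Nat.gcd (p ^ m + 1) (p ^ s + 1) = p ^ Nat.gcd m s + 1) := by
  haveI : Fact (Nat.Prime 2) := ⟨Nat.prime_two⟩
  have hp1 : 1 ≤ p := hp.one_lt.le.trans' (by norm_num)
  constructor
  · intro hne
    rcases lt_or_gt_of_ne hne with h | h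
    · rw [Nat.gcd_comm]
      exact aux_lt_case p m s hp hodd hm hs h
    · exact aux_lt_case p s m hp hodd hs hm h
  · intro heq
    set d := Nat.gcd m s with hd
    have hd0 : 0 < d := Nat.gcd_pos_of_pos_left _ hm
    obtain ⟨k, hk⟩ := Nat.gcd_dvd_left m s
    obtain ⟨l, hl⟩ := Nat.gcd_dvd_right m s
    have hk0 : k ≠ 0 := by rintro rfl; omega
    have hl0 : l ≠ 0 := by rintro rfl; omega
    have hvm : padicValNat 2 m = padicValNat 2 d + padicValNat 2 k := by
      rw [hk]; exact padicValNat.mul (by omega) hk0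
    have hvs : padicValNat 2 s = padicValNat 2 d + padicValNat 2 l := by
      rw [hl]; exact padicValNat.mul (by omega) hl0
    -- k and l are both odd
    have hkl : padicValNat 2 k = padicValNat 2 l := by omega
    have contra : ¬ (2 ∣ k ∧ 2 ∣ l) := by
      rintro ⟨h2k, h2l⟩
      have hdm : 2 * d ∣ m := by rw [hk, mul_comm 2 d]; exact mul_dvd_mul_left d h2k
      have hds : 2 * d ∣ s := by rw [hl, mul_comm 2 d]; exact mul_dvd_mul_left d h2l
      have : 2 * d ∣ d := hd ▸ Nat.dvd_gcd hdm hds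
      have := Nat.le_of_dvd hd0 this
      omega
    have hkodd : Odd k := by
      rw [Nat.odd_iff, ← Nat.two_dvd_ne_zero]
      intro h2k
      have h2l : 2 ∣ l := dvd_of_one_le_padicValNat (by
        have := one_le_padicValNat_of_dvd hk0 h2k
        omega)
      exact contra ⟨h2k, h2l⟩
    have hlodd : Odd l := by
      rw [Nat.odd_iff, ← Nat.two_dvd_ne_zero]
      intro h2l
      have h2k : 2 ∣ k := dvd_of_one_le_padicValNat (by
        have := one_le_padicValNat_of_dvd hl0 h2l
        omega)
      exact contra ⟨h2k, h2l⟩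
    set g := Nat.gcd (p ^ m + 1) (p ^ s + 1) with hg
    have hg1 : g ∣ p ^ m + 1 := Nat.gcd_dvd_left _ _
    have hg2 : g ∣ p ^ s + 1 := Nat.gcd_dvd_right _ _
    have hgd : g ∣ p ^ (2 * d) - 1 := aux_ord_dvd p g m s hp1 hg1 hg2
    have hgm : g ∣ (p ^ d) ^ k + 1 := by rwa [← pow_mul, ← hk]
    have hdvd : g ∣ p ^ d + 1 := aux_key_dvd p d k g hp1 hkodd hgd hgm
    have hdvd' : p ^ d + 1 ∣ g := by
      refine Nat.dvd_gcd ?_ ?_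
      · have := Odd.nat_add_dvd_pow_add_pow (p ^ d) 1 hkodd
        rw [← pow_mul, ← hk, one_pow] at this; exact this
      · have := Odd.nat_add_dvd_pow_add_pow (p ^ d) 1 hlodd
        rw [← pow_mul, ← hl, one_pow] at this; exact this
    exact Nat.dvd_antisymm hdvd hdvd'
end

section
/- Let p be an odd prime, s, m positive integers, d = gcd(s,m), L = F_{p^m}, σ = p^s, and write v₂ for the 2-adic valuation. (i) If v₂(d) = v₂(m), then gcd(2s, m) = d, gcd(p^m − 1, p^s + 1) = 2, and L*^{σ−1} ∩ L*^{σ+1} = L*^{σ²−1}. (ii) If v₂(d) < v₂(m), then gcd(2s, m) = 2d, gcd(p^m − 1, p^s + 1) = p^d + 1, and L*^{σ²−1} has index 2 in the group L*^{σ−1} ∩ L*^{σ+1}. -/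
/-- The subgroup `L*^k = {t^k : t ∈ L*}` of the group of units of `L`. -/
def powSubgroup (L : Type*) [Field L] (k : ℕ) : Subgroup Lˣ :=
  (powMonoidHom k : Lˣ →* Lˣ).range

theorem aux_gcd_pow_sub_one (p : ℕ) (hp : 2 ≤ p) :
    ∀ a b : ℕ, Nat.gcd (p ^ a - 1) (p ^ b - 1) = p ^ Nat.gcd a b - 1 := by
  intro a
  induction a using Nat.strong_induction_on with
  | _ a ih =>
    intro b
    rcases Nat.eq_zero_or_pos a with rfl | ha
    · simp
    · have hr : b % a < a := Nat.mod_lt _ ha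
      obtain ⟨t, ht⟩ : p ^ a - 1 ∣ p ^ (a * (b / a)) - 1 := by
        have := Nat.sub_dvd_pow_sub_pow (p ^ a) 1 (b / a)
        simpa [← pow_mul] using this
      have hb : p ^ b - 1 = (p ^ (b % a) - 1) + (p ^ (b % a) * t) * (p ^ a - 1) := by
        have h1 : p ^ b = p ^ (b % a) * p ^ (a * (b / a)) := by
          rw [← pow_add]
          congr 1
          exact (Nat.mod_add_div b a).symm
        have h2 : 1 ≤ p ^ a := Nat.one_le_pow _ _ (by omega)
        have h3 : 1 ≤ p ^ (a * (b / a)) := Nat.one_le_pow _ _ (by omega)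
        have h4 : 1 ≤ p ^ (b % a) := Nat.one_le_pow _ _ (by omega)
        have h5 : 1 ≤ p ^ b := Nat.one_le_pow _ _ (by omega)
        zify [h2, h3, h4, h5] at ht h1 ⊢
        linear_combination h1 + (p : ℤ) ^ (b % a) * ht
      rw [hb, Nat.gcd_add_mul_right_right, Nat.gcd_comm, ih (b % a) hr a,
        Nat.gcd_rec a b]

theorem aux_pow_sub_one_dvd (p : ℕ) {a b : ℕ} (h : a ∣ b) : p ^ a - 1 ∣ p ^ b - 1 := by
  obtain ⟨c, rfl⟩ := h
  simpa [← pow_mul] using Nat.sub_dvd_pow_sub_pow (p ^ a) 1 c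

theorem aux_sq_sub_one (p a : ℕ) (hp : 1 ≤ p) :
    (p ^ a - 1) * (p ^ a + 1) = p ^ (2 * a) - 1 := by
  have h1 : 1 ≤ p ^ a := Nat.one_le_pow _ _ hp
  have h2 : 1 ≤ p ^ (2 * a) := Nat.one_le_pow _ _ hp
  zify [h1, h2]
  ring

section grp
variable {G : Type*} [CommGroup G] [Fintype G]

theorem aux_range_pow_gcd (k : ℕ) :
    (powMonoidHom k : G →* G).range
      = (powMonoidHom (Nat.gcd (Fintype.card G) k) : G →* G).range := by
  set n := Fintype.card G with hn
  apply le_antisymm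
  · rintro _ ⟨x, rfl⟩
    refine ⟨x ^ (k / Nat.gcd n k), ?_⟩
    simp only [powMonoidHom_apply, ← pow_mul]
    rw [Nat.div_mul_cancel (Nat.gcd_dvd_right n k)]
  · rintro _ ⟨x, rfl⟩
    refine ⟨x ^ (Nat.gcdB n k), ?_⟩
    simp only [powMonoidHom_apply]
    have hx : x ^ (n : ℤ) = 1 := by rw [zpow_natCast]; exact pow_card_eq_one
    rw [← zpow_natCast (x ^ Nat.gcdB n k) k, ← zpow_mul, ← zpow_natCast x (Nat.gcd n k),
      Nat.gcd_eq_gcd_ab n k, zpow_add, zpow_mul x ((n : ℕ) : ℤ), hx, one_zpow, one_mul,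
      zpow_mul x ((k : ℕ) : ℤ)]
    rw [← zpow_mul, mul_comm]

theorem aux_range_pow_eq_ker [IsCyclic G] (j : ℕ) (hj : j ∣ Fintype.card G) (hj0 : 0 < j) :
    (powMonoidHom j : G →* G).range
      = (powMonoidHom (Fintype.card G / j) : G →* G).ker := by
  set n := Fintype.card G with hn
  have hn0 : 0 < n := Fintype.card_pos
  have he0 : 0 < n / j := Nat.div_pos (Nat.le_of_dvd hn0 hj) hj0
  apply le_antisymm
  · rintro _ ⟨x, rfl⟩
    simp only [MonoidHom.mem_ker, powMonoidHom_apply, ← pow_mul]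
    rw [Nat.mul_div_cancel' hj]
    exact pow_card_eq_one
  · intro x hx
    simp only [MonoidHom.mem_ker, powMonoidHom_apply] at hx
    obtain ⟨g0, hg0⟩ := IsCyclic.exists_generator (α := G)
    have ho : orderOf g0 = n := by
      rw [orderOf_eq_card_of_forall_mem_zpowers hg0, Nat.card_eq_fintype_card]
    obtain ⟨i, hi⟩ := Subgroup.mem_zpowers_iff.mp (hg0 x)
    have hdvd : ((j : ℤ) * (n / j : ℕ)) ∣ i * (n / j : ℕ) := by
      have : (orderOf g0 : ℤ) ∣ i * (n / j : ℕ) := by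
        rw [orderOf_dvd_iff_zpow_eq_one, zpow_mul, hi, zpow_natCast, hx]
      have hnj : (n : ℤ) = (j : ℤ) * ((n / j : ℕ) : ℤ) := by
        exact_mod_cast (Nat.mul_div_cancel' hj).symm
      rwa [ho, hnj] at this
    have hji : (j : ℤ) ∣ i :=
      (mul_dvd_mul_iff_right (by exact_mod_cast he0.ne' : ((n / j : ℕ) : ℤ) ≠ 0)).mp hdvd
    obtain ⟨c, hc⟩ := hji
    refine ⟨g0 ^ c, ?_⟩
    simp only [powMonoidHom_apply]
    rw [← zpow_natCast (g0 ^ c) j, ← zpow_mul, mul_comm, ← hc, hi]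

theorem aux_ker_pow_inf (a b : ℕ) :
    (powMonoidHom a : G →* G).ker ⊓ (powMonoidHom b : G →* G).ker
      = (powMonoidHom (Nat.gcd a b) : G →* G).ker := by
  ext x
  simp only [Subgroup.mem_inf, MonoidHom.mem_ker, powMonoidHom_apply,
    ← orderOf_dvd_iff_pow_eq_one]
  exact Nat.dvd_gcd_iff.symm

theorem aux_ker_pow_mono {a b : ℕ} (h : a ∣ b) :
    (powMonoidHom a : G →* G).ker ≤ (powMonoidHom b : G →* G).ker := by
  intro x hx
  simp only [MonoidHom.mem_ker, powMonoidHom_apply] at hx ⊢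
  obtain ⟨c, rfl⟩ := h
  rw [pow_mul, hx, one_pow]

theorem aux_card_ker_pow [IsCyclic G] (j : ℕ) (hj : j ∣ Fintype.card G) (hj0 : 0 < j) :
    Nat.card ((powMonoidHom j : G →* G).ker) = j := by
  set n := Fintype.card G with hn
  have hn0 : 0 < n := Fintype.card_pos
  have he0 : 0 < n / j := Nat.div_pos (Nat.le_of_dvd hn0 hj) hj0
  obtain ⟨g0, hg0⟩ := IsCyclic.exists_generator (α := G)
  have ho : orderOf g0 = n := by
    rw [orderOf_eq_card_of_forall_mem_zpowers hg0, Nat.card_eq_fintype_card]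
  have hker : (powMonoidHom j : G →* G).ker = Subgroup.zpowers (g0 ^ (n / j)) := by
    apply le_antisymm
    · intro x hx
      simp only [MonoidHom.mem_ker, powMonoidHom_apply] at hx
      obtain ⟨i, hi⟩ := Subgroup.mem_zpowers_iff.mp (hg0 x)
      have hdvd : (((n / j : ℕ) : ℤ) * (j : ℤ)) ∣ i * j := by
        have : (orderOf g0 : ℤ) ∣ i * j := by
          rw [orderOf_dvd_iff_zpow_eq_one, zpow_mul, hi, zpow_natCast, hx]
        have hnj : (n : ℤ) = ((n / j : ℕ) : ℤ) * (j : ℤ) := by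
          exact_mod_cast (Nat.div_mul_cancel hj).symm
        rwa [ho, hnj] at this
      have hji : ((n / j : ℕ) : ℤ) ∣ i :=
        (mul_dvd_mul_iff_right (by exact_mod_cast hj0.ne' : (j : ℤ) ≠ 0)).mp hdvd
      obtain ⟨c, hc⟩ := hji
      exact Subgroup.mem_zpowers_iff.mpr
        ⟨c, by rw [← zpow_natCast g0 (n / j), ← zpow_mul, ← hc, hi]⟩
    · rw [Subgroup.zpowers_le, MonoidHom.mem_ker, powMonoidHom_apply, ← pow_mul,
        Nat.div_mul_cancel hj]
      exact pow_card_eq_one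
  rw [hker, Nat.card_zpowers, orderOf_pow, ho, Nat.gcd_eq_right (Nat.div_dvd_of_dvd hj),
    Nat.div_div_self hj hn0.ne']

theorem aux_relindex_two {H K : Subgroup G} (hHK : H ≤ K) {w : ℕ} (hw : 0 < w)
    (hH : Nat.card H = w) (hK : Nat.card K = 2 * w) : H.relIndex K = 2 := by
  have h1 : (H.subgroupOf K).index * Nat.card (H.subgroupOf K) = Nat.card K :=
    Subgroup.index_mul_card _
  have h2 : Nat.card (H.subgroupOf K) = Nat.card H :=
    Nat.card_congr (Subgroup.subgroupOfEquivOfLe hHK).toEquiv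
  rw [h2, hH, hK] at h1
  exact Nat.eq_of_mul_eq_mul_right hw h1

end grp

/-- Lemma 7.4. -/
theorem power_subgroups_lemma
    (p s m : ℕ) (hp : p.Prime) (hodd : Odd p) (hs : 0 < s) (hm : 0 < m)
    (L : Type*) [Field L] [Fintype L] (hcard : Fintype.card L = p ^ m) :
    (padicValNat 2 (Nat.gcd s m) = padicValNat 2 m →
      Nat.gcd (2 * s) m = Nat.gcd s m ∧
      Nat.gcd (p ^ m - 1) (p ^ s + 1) = 2 ∧
      powSubgroup L (p ^ s - 1) ⊓ powSubgroup L (p ^ s + 1)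
        = powSubgroup L (p ^ (2 * s) - 1)) ∧
    (padicValNat 2 (Nat.gcd s m) < padicValNat 2 m →
      Nat.gcd (2 * s) m = 2 * Nat.gcd s m ∧
      Nat.gcd (p ^ m - 1) (p ^ s + 1) = p ^ Nat.gcd s m + 1 ∧
      Subgroup.relIndex (powSubgroup L (p ^ (2 * s) - 1))
        (powSubgroup L (p ^ s - 1) ⊓ powSubgroup L (p ^ s + 1)) = 2) := by
  classical
  haveI : Fact (Nat.Prime 2) := ⟨Nat.prime_two⟩
  have hp2 : 2 ≤ p := hp.two_le
  set d := Nat.gcd s m with hdd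
  have hd0 : 0 < d := Nat.gcd_pos_of_pos_left m hs
  have hds : d ∣ s := Nat.gcd_dvd_left s m
  have hdm : d ∣ m := Nat.gcd_dvd_right s m
  have hdles : d ≤ s := Nat.le_of_dvd hs hds
  have hA : d ∣ Nat.gcd (2 * s) m := Nat.dvd_gcd (hds.mul_left 2) hdm
  have hB : Nat.gcd (2 * s) m ∣ 2 * d := by
    have h1 : Nat.gcd (2 * s) m ∣ Nat.gcd (2 * s) (2 * m) :=
      Nat.gcd_dvd_gcd_of_dvd_right _ (dvd_mul_left m 2)
    rwa [Nat.gcd_mul_left] at h1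
  have hps1 : 1 ≤ p ^ s := Nat.one_le_pow _ _ (by omega)
  have hpd1 : 2 ≤ p ^ d := by
    calc 2 = 2 ^ 1 := rfl
    _ ≤ p ^ d := Nat.pow_le_pow_left hp2 d |>.trans' (Nat.pow_le_pow_right (by omega) hd0)
  have hpds : p ^ d ≤ p ^ s := Nat.pow_le_pow_right (by omega) hdles
  have hpmodd : Odd (p ^ m) := hodd.pow
  have hpsodd : Odd (p ^ s) := hodd.pow
  have hpdodd : Odd (p ^ d) := hodd.pow
  have h2pm : 2 ∣ p ^ m - 1 := by obtain ⟨c, hc⟩ := hpmodd; omega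
  have h2ps : 2 ∣ p ^ s + 1 := by obtain ⟨c, hc⟩ := hpsodd; omega
  have h2pd : 2 ∣ p ^ d - 1 := by obtain ⟨c, hc⟩ := hpdodd; omega
  have hsq : (p ^ s - 1) * (p ^ s + 1) = p ^ (2 * s) - 1 := aux_sq_sub_one p s (by omega)
  have hcardu : Fintype.card Lˣ = p ^ m - 1 := by rw [Fintype.card_units, hcard]
  have hnpos : 0 < p ^ m - 1 := by
    have : 2 ≤ p ^ m := by
      calc 2 = 2 ^ 1 := rfl
      _ ≤ p ^ m := Nat.pow_le_pow_left hp2 m |>.trans' (Nat.pow_le_pow_right (by omega) hm)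
    omega
  constructor
  · -- case (i)
    intro h
    have hgcd2s : Nat.gcd (2 * s) m = d := by
      obtain ⟨e, he⟩ := hA
      have he2 : e ∣ 2 := by
        have h1 : d * e ∣ d * 2 := by rw [← he, mul_comm d 2]; exact hB
        exact (Nat.mul_dvd_mul_iff_left hd0).mp h1
      rcases (Nat.prime_two.eq_one_or_self_of_dvd e he2) with h1 | h1
      · rw [he, h1, mul_one]
      · exfalso
        subst h1
        have h2 : d * 2 ∣ m := he ▸ Nat.gcd_dvd_right (2 * s) m
        obtain ⟨c, hc⟩ := h2
        have hc0 : c ≠ 0 := by rintro rfl; omega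
        have hv : padicValNat 2 m = padicValNat 2 d + (1 + padicValNat 2 c) := by
          rw [hc, mul_assoc, padicValNat.mul hd0.ne' (by positivity),
            padicValNat.mul (by norm_num) hc0, padicValNat.self one_lt_two]
        omega
    refine ⟨hgcd2s, ?_, ?_⟩
    · -- gcd (p^m - 1) (p^s + 1) = 2
      have hg1 : Nat.gcd (p ^ m - 1) (p ^ s + 1) ∣ p ^ d - 1 := by
        have hdvd : p ^ s + 1 ∣ p ^ (2 * s) - 1 := Dvd.intro_left _ hsq
        have h1 : Nat.gcd (p ^ m - 1) (p ^ s + 1) ∣ Nat.gcd (p ^ m - 1) (p ^ (2 * s) - 1) :=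
          Nat.dvd_gcd (Nat.gcd_dvd_left _ _) ((Nat.gcd_dvd_right _ _).trans hdvd)
        rwa [aux_gcd_pow_sub_one p hp2 m (2 * s), Nat.gcd_comm m (2 * s), hgcd2s] at h1
      have hg2 : Nat.gcd (p ^ m - 1) (p ^ s + 1) ∣ p ^ s - 1 :=
        hg1.trans (aux_pow_sub_one_dvd p hds)
      have hg3 : Nat.gcd (p ^ m - 1) (p ^ s + 1) ∣ 2 := by
        have := Nat.dvd_sub (Nat.gcd_dvd_right (p ^ m - 1) (p ^ s + 1)) hg2
        rwa [show p ^ s + 1 - (p ^ s - 1) = 2 by omega] at this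
      exact Nat.dvd_antisymm hg3 (Nat.dvd_gcd h2pm h2ps)
    · -- the subgroup equality
      have hgA' : Nat.gcd (Fintype.card Lˣ) (p ^ s - 1) = p ^ d - 1 := by
        rw [hcardu, aux_gcd_pow_sub_one p hp2, Nat.gcd_comm m s]
      have hgC' : Nat.gcd (Fintype.card Lˣ) (p ^ (2 * s) - 1) = p ^ d - 1 := by
        rw [hcardu, aux_gcd_pow_sub_one p hp2, Nat.gcd_comm m (2 * s), hgcd2s]
      have hgB' : Nat.gcd (Fintype.card Lˣ) (p ^ s + 1) = 2 := by
        rw [hcardu]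
        have hg1 : Nat.gcd (p ^ m - 1) (p ^ s + 1) ∣ p ^ d - 1 := by
          have hdvd : p ^ s + 1 ∣ p ^ (2 * s) - 1 := Dvd.intro_left _ hsq
          have h1 : Nat.gcd (p ^ m - 1) (p ^ s + 1) ∣ Nat.gcd (p ^ m - 1) (p ^ (2 * s) - 1) :=
            Nat.dvd_gcd (Nat.gcd_dvd_left _ _) ((Nat.gcd_dvd_right _ _).trans hdvd)
          rwa [aux_gcd_pow_sub_one p hp2 m (2 * s), Nat.gcd_comm m (2 * s), hgcd2s] at h1
        have hg2 : Nat.gcd (p ^ m - 1) (p ^ s + 1) ∣ p ^ s - 1 :=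
          hg1.trans (aux_pow_sub_one_dvd p hds)
        have hg3 : Nat.gcd (p ^ m - 1) (p ^ s + 1) ∣ 2 := by
          have := Nat.dvd_sub (Nat.gcd_dvd_right (p ^ m - 1) (p ^ s + 1)) hg2
          rwa [show p ^ s + 1 - (p ^ s - 1) = 2 by omega] at this
        exact Nat.dvd_antisymm hg3 (Nat.dvd_gcd h2pm h2ps)
      have hAC : powSubgroup L (p ^ s - 1) = powSubgroup L (p ^ (2 * s) - 1) := by
        unfold powSubgroup
        rw [aux_range_pow_gcd (p ^ s - 1), aux_range_pow_gcd (p ^ (2 * s) - 1), hgA', hgC']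
      have hpd1dvd : p ^ d - 1 ∣ Fintype.card Lˣ := by
        rw [hcardu]; exact aux_pow_sub_one_dvd p hdm
      have h2dvd : (2 : ℕ) ∣ Fintype.card Lˣ := by rw [hcardu]; exact h2pm
      have hAB : powSubgroup L (p ^ s - 1) ≤ powSubgroup L (p ^ s + 1) := by
        unfold powSubgroup
        rw [aux_range_pow_gcd (p ^ s - 1), aux_range_pow_gcd (p ^ s + 1), hgA', hgB',
          aux_range_pow_eq_ker _ hpd1dvd (by omega), aux_range_pow_eq_ker _ h2dvd (by omega)]
        apply aux_ker_pow_mono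
        obtain ⟨t, ht⟩ := h2pd
        obtain ⟨u, hu⟩ := hpd1dvd
        have h1 : Fintype.card Lˣ / (p ^ d - 1) = u := by
          rw [hu, Nat.mul_div_cancel_left _ (by omega)]
        have h2 : Fintype.card Lˣ / 2 = t * u := by
          rw [hu, ht, mul_assoc, Nat.mul_div_cancel_left _ (by omega)]
        rw [h1, h2]
        exact dvd_mul_left u t
      rw [← hAC, inf_eq_left.mpr hAB]
  · -- case (ii)
    intro h
    have h2dm : 2 * d ∣ m := by
      obtain ⟨t, ht⟩ := hdm
      have ht0 : t ≠ 0 := by rintro rfl; omega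
      rcases Nat.even_or_odd t with he | ho
      · obtain ⟨t', ht'⟩ := he
        exact ⟨t', by rw [ht, ht']; ring⟩
      · exfalso
        have ho' : t % 2 = 1 := Nat.odd_iff.mp ho
        have hv : padicValNat 2 m = padicValNat 2 d := by
          rw [ht, padicValNat.mul hd0.ne' ht0,
            padicValNat.eq_zero_of_not_dvd (by omega : ¬ 2 ∣ t), add_zero]
        omega
    have hgcd2s : Nat.gcd (2 * s) m = 2 * d := by
      exact Nat.dvd_antisymm hB (Nat.dvd_gcd (mul_dvd_mul_left 2 hds) h2dm)
    obtain ⟨k, hk⟩ := hds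
    have hkodd : Odd k := by
      rcases Nat.even_or_odd k with he | ho
      · exfalso
        obtain ⟨k', hk'⟩ := he
        have h2ds : 2 * d ∣ s := ⟨k', by rw [hk, hk']; ring⟩
        have : 2 * d ∣ d := Nat.dvd_gcd h2ds h2dm
        have := Nat.le_of_dvd hd0 this
        omega
      · exact ho
    obtain ⟨j, hj⟩ := hkodd
    -- key divisibilities
    have hQ : p ^ d + 1 ∣ p ^ (2 * d) - 1 :=
      Dvd.intro_left _ (aux_sq_sub_one p d (by omega))
    have hQm : p ^ (2 * d) - 1 ∣ p ^ m - 1 := aux_pow_sub_one_dvd p h2dm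
    have hsdexp : 2 * d ∣ s - d := by
      refine ⟨j, ?_⟩
      have h1 : s = 2 * d * j + d := by rw [hk, hj]; ring
      omega
    have hid : p ^ d * (p ^ (s - d) - 1) = p ^ s - p ^ d := by
      rw [Nat.mul_sub, mul_one, ← pow_add, show d + (s - d) = s by omega]
    have hQsd : p ^ (2 * d) - 1 ∣ p ^ s - p ^ d := by
      rw [← hid]
      exact (aux_pow_sub_one_dvd p hsdexp).mul_left _
    have hPs : p ^ d + 1 ∣ p ^ s + 1 := by
      have h1 : p ^ d + 1 ∣ p ^ s - p ^ d := hQ.trans hQsd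
      have h2 : p ^ s + 1 = (p ^ s - p ^ d) + (p ^ d + 1) := by omega
      rw [h2]
      exact dvd_add h1 dvd_rfl
    have hPm : p ^ d + 1 ∣ p ^ m - 1 := hQ.trans hQm
    have hgQ : Nat.gcd (p ^ m - 1) (p ^ s + 1) ∣ p ^ (2 * d) - 1 := by
      have hdvd : p ^ s + 1 ∣ p ^ (2 * s) - 1 := Dvd.intro_left _ hsq
      have h1 : Nat.gcd (p ^ m - 1) (p ^ s + 1) ∣ Nat.gcd (p ^ m - 1) (p ^ (2 * s) - 1) :=
        Nat.dvd_gcd (Nat.gcd_dvd_left _ _) ((Nat.gcd_dvd_right _ _).trans hdvd)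
      rwa [aux_gcd_pow_sub_one p hp2 m (2 * s), Nat.gcd_comm m (2 * s), hgcd2s] at h1
    have hgcdPs : Nat.gcd (p ^ m - 1) (p ^ s + 1) = p ^ d + 1 := by
      apply Nat.dvd_antisymm
      · have h1 := hgQ.trans hQsd
        have h2 := Nat.dvd_sub (Nat.gcd_dvd_right (p ^ m - 1) (p ^ s + 1)) h1
        rwa [show p ^ s + 1 - (p ^ s - p ^ d) = p ^ d + 1 by omega] at h2
      · exact Nat.dvd_gcd hPm hPs
    refine ⟨hgcd2s, hgcdPs, ?_⟩
    -- the relindex statement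
    have hQn : p ^ (2 * d) - 1 ∣ Fintype.card Lˣ := by rw [hcardu]; exact hQm
    have hp2d1 : 0 < p ^ (2 * d) - 1 := by
      have : p ^ d ≤ p ^ (2 * d) := Nat.pow_le_pow_right (by omega) (by omega)
      omega
    obtain ⟨w, hnw⟩ : ∃ w, Fintype.card Lˣ = (p ^ (2 * d) - 1) * w :=
      ⟨_, (Nat.mul_div_cancel' hQn).symm⟩
    have hn0 : 0 < Fintype.card Lˣ := by rw [hcardu]; exact hnpos
    have hw0 : 0 < w := by
      rcases Nat.eq_zero_or_pos w with rfl | h'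
      · omega
      · exact h'
    have hprod : (p ^ d - 1) * (p ^ d + 1) = p ^ (2 * d) - 1 := aux_sq_sub_one p d (by omega)
    have hdiv1 : Fintype.card Lˣ / (p ^ d - 1) = (p ^ d + 1) * w := by
      rw [hnw, ← hprod, mul_assoc, Nat.mul_div_cancel_left _ (by omega)]
    have hdiv2 : Fintype.card Lˣ / (p ^ d + 1) = (p ^ d - 1) * w := by
      rw [hnw, ← hprod, mul_comm (p ^ d - 1) (p ^ d + 1), mul_assoc,
        Nat.mul_div_cancel_left _ (by omega)]
    have hdiv3 : Fintype.card Lˣ / (p ^ (2 * d) - 1) = w := by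
      rw [hnw, Nat.mul_div_cancel_left _ hp2d1]
    have hgA' : Nat.gcd (Fintype.card Lˣ) (p ^ s - 1) = p ^ d - 1 := by
      rw [hcardu, aux_gcd_pow_sub_one p hp2, Nat.gcd_comm m s]
    have hgB' : Nat.gcd (Fintype.card Lˣ) (p ^ s + 1) = p ^ d + 1 := by
      rw [hcardu]; exact hgcdPs
    have hgC' : Nat.gcd (Fintype.card Lˣ) (p ^ (2 * s) - 1) = p ^ (2 * d) - 1 := by
      rw [hcardu, aux_gcd_pow_sub_one p hp2, Nat.gcd_comm m (2 * s), hgcd2s]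
    have hdA : p ^ d - 1 ∣ Fintype.card Lˣ := by
      rw [hcardu]; exact aux_pow_sub_one_dvd p hdm
    have hdB : p ^ d + 1 ∣ Fintype.card Lˣ := by rw [hcardu]; exact hPm
    have hC : powSubgroup L (p ^ (2 * s) - 1) = (powMonoidHom w : Lˣ →* Lˣ).ker := by
      unfold powSubgroup
      rw [aux_range_pow_gcd (p ^ (2 * s) - 1), hgC',
        aux_range_pow_eq_ker _ hQn (by omega), hdiv3]
    have hABker : powSubgroup L (p ^ s - 1) ⊓ powSubgroup L (p ^ s + 1)
        = (powMonoidHom (2 * w) : Lˣ →* Lˣ).ker := by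
      unfold powSubgroup
      rw [aux_range_pow_gcd (p ^ s - 1), aux_range_pow_gcd (p ^ s + 1), hgA', hgB',
        aux_range_pow_eq_ker _ hdA (by omega), aux_range_pow_eq_ker _ hdB (by omega),
        aux_ker_pow_inf, hdiv1, hdiv2, Nat.gcd_mul_right]
      congr 1
      have hgsub : Nat.gcd (p ^ d + 1 - (p ^ d - 1)) (p ^ d - 1)
          = Nat.gcd (p ^ d + 1) (p ^ d - 1) := Nat.gcd_sub_self_left (by omega)
      rw [show p ^ d + 1 - (p ^ d - 1) = 2 by omega] at hgsub
      rw [← hgsub, Nat.gcd_eq_left h2pd]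
    have h2wn : 2 * w ∣ Fintype.card Lˣ := by
      obtain ⟨t, ht⟩ := h2pd
      have h2p2d : p ^ (2 * d) - 1 = 2 * (t * (p ^ d + 1)) := by
        rw [← hprod, ht]; ring
      exact ⟨t * (p ^ d + 1), by rw [hnw, h2p2d]; ring⟩
    have hwn : w ∣ Fintype.card Lˣ := ⟨p ^ (2 * d) - 1, by rw [hnw]; ring⟩
    rw [hC, hABker]
    apply aux_relindex_two (aux_ker_pow_mono (dvd_mul_left w 2)) hw0
    · exact aux_card_ker_pow w hwn hw0
    · exact aux_card_ker_pow (2 * w) h2wn (by omega)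
end

section
/- Let p be an odd prime, L = F_{p^m}, n ∈ L a non-square, σ = p^s with 0 ≤ s < m, and d = gcd(s,m) (with d = m when s = 0). Then: (i) −n^{(σ−1)/2} ∈ L*^{σ−1} if and only if both s/d and m/d are odd; (ii) n^{(σ−1)/2} ∈ L*^{σ−1} if and only if s/d is even (in which case m/d is necessarily odd). -/
lemma my_gcd_pow_sub_one (p : ℕ) (hp : 1 ≤ p) :
    ∀ s m : ℕ, Nat.gcd (p ^ s - 1) (p ^ m - 1) = p ^ Nat.gcd s m - 1 := by
  intro s
  induction s using Nat.strong_induction_on with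
  | _ s ih =>
    intro m
    rcases Nat.eq_zero_or_pos s with rfl | hs
    · simp
    · have hr : m % s < s := Nat.mod_lt _ hs
      obtain ⟨C, hC⟩ : p ^ s - 1 ∣ p ^ (s * (m / s)) - 1 := by
        have := Nat.sub_dvd_pow_sub_pow (p ^ s) 1 (m / s)
        simpa [← pow_mul] using this
      have hpow : ∀ k : ℕ, 1 ≤ p ^ k := fun k => Nat.one_le_pow _ _ hp
      have h1 : p ^ (s * (m / s)) = (p ^ s - 1) * C + 1 := by
        have := hpow (s * (m / s)); omega
      have hm : m = s * (m / s) + m % s := by have := Nat.div_add_mod m s; omega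
      have h2 : p ^ m - 1 = (p ^ (m % s) - 1) + (p ^ s - 1) * (C * p ^ (m % s)) := by
        have : p ^ m = p ^ (s * (m / s)) * p ^ (m % s) := by
          nth_rewrite 1 [hm]
          rw [pow_add]
        rw [this, h1]
        have := hpow (m % s)
        ring_nf
        have hle : p ^ (m % s) ≤ (p ^ s - 1) * C * p ^ (m % s) + p ^ (m % s) := by omega
        omega
      rw [h2, Nat.gcd_add_mul_left_right, Nat.gcd_comm, ih _ hr]
      congr 1
      rw [Nat.gcd_rec s m]

lemma my_parity_quot (p d : ℕ) (hodd : Odd p) (hd : 0 < d) :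
    ∀ j : ℕ, ∃ T : ℕ, p ^ (d * j) = (p ^ d - 1) * T + 1 ∧ (Odd T ↔ Odd j) := by
  have hp1 : 1 ≤ p ^ d := Nat.one_le_pow _ _ hodd.pos
  have hpd : Odd (p ^ d) := hodd.pow
  intro j
  induction j with
  | zero => exact ⟨0, by simp⟩
  | succ j ih =>
    obtain ⟨T, hT, hpar⟩ := ih
    refine ⟨T * p ^ d + 1, ?_, ?_⟩
    · rw [Nat.mul_succ, pow_add, hT, add_mul, one_mul]
      have h3 : (p ^ d - 1) * (T * p ^ d + 1) = (p ^ d - 1) * T * p ^ d + (p ^ d - 1) := by ring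
      rw [h3]
      omega
    · have h4 : ¬ Even (p ^ d) := by rwa [Nat.not_even_iff_odd]
      rw [Nat.odd_add_one, Nat.odd_add_one]
      refine not_congr ?_
      rw [Nat.odd_mul]
      simp [hpd, hpar]

lemma my_cyclic_pow_mem {G : Type*} [Group G] [Fintype G] [IsCyclic G] (k : ℕ) (x : G) :
    (∃ y : G, y ^ k = x) ↔ x ^ (Fintype.card G / Nat.gcd k (Fintype.card G)) = 1 := by
  obtain ⟨g, hg⟩ := IsCyclic.exists_generator (α := G)
  set N := Fintype.card G with hNdef
  have hN : 0 < N := Fintype.card_pos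
  set c := Nat.gcd k N with hc
  have hcN : c ∣ N := Nat.gcd_dvd_right k N
  have hck : c ∣ k := Nat.gcd_dvd_left k N
  have hc0 : 0 < c := Nat.gcd_pos_of_pos_right _ hN
  have horder : orderOf g = N := by
    rw [hNdef, ← Nat.card_eq_fintype_card]
    exact orderOf_eq_card_of_forall_mem_zpowers hg
  constructor
  · rintro ⟨y, rfl⟩
    rw [← pow_mul]
    have hkc : k * (N / c) = (k / c) * N := by
      obtain ⟨N', hN'⟩ := hcN
      obtain ⟨k', hk'⟩ := hck
      rw [hN', hk', Nat.mul_div_cancel_left _ hc0, Nat.mul_div_cancel_left _ hc0]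
      ring
    rw [hkc, pow_mul, pow_card_eq_one]
  · intro hx
    obtain ⟨a, ha⟩ := Subgroup.mem_zpowers_iff.mp (hg x)
    have hgN : g ^ (N : ℤ) = 1 := by rw [zpow_natCast]; exact pow_card_eq_one
    have h1 : g ^ (a * ((N / c : ℕ) : ℤ)) = 1 := by
      rw [zpow_mul, ha, zpow_natCast, hx]
    have h2 : ((N : ℤ)) ∣ a * ((N / c : ℕ) : ℤ) := by
      rw [← horder] at h1 ⊢
      exact orderOf_dvd_iff_zpow_eq_one.mpr h1
    obtain ⟨b, hb⟩ := h2
    have hNc : (N : ℤ) = (c : ℤ) * ((N / c : ℕ) : ℤ) := by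
      rw [← Nat.cast_mul, Nat.mul_div_cancel' hcN]
    have hNc0 : ((N / c : ℕ) : ℤ) ≠ 0 := by
      have : 0 < N / c := Nat.div_pos (Nat.le_of_dvd hN hcN) hc0
      exact_mod_cast this.ne'
    have hab : a = (c : ℤ) * b := by
      have : a * ((N / c : ℕ) : ℤ) = ((c : ℤ) * b) * ((N / c : ℕ) : ℤ) := by
        rw [hb, hNc]; ring
      exact mul_right_cancel₀ hNc0 this
    refine ⟨g ^ (Nat.gcdA k N * b), ?_⟩
    have hbez := Nat.gcd_eq_gcd_ab k N
    have hexp : Nat.gcdA k N * b * (k : ℤ) =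
        (c : ℤ) * b + (N : ℤ) * (-(Nat.gcdB k N) * b) := by
      rw [hc]; linear_combination (-b) * hbez
    calc (g ^ (Nat.gcdA k N * b)) ^ k
        = g ^ (Nat.gcdA k N * b * (k : ℤ)) := by rw [← zpow_natCast, ← zpow_mul]
      _ = g ^ ((c : ℤ) * b) * (g ^ (N : ℤ)) ^ (-(Nat.gcdB k N) * b) := by
          rw [hexp, zpow_add, zpow_mul, zpow_mul]
      _ = g ^ a := by rw [hgN, one_zpow, mul_one, hab, zpow_mul]
      _ = x := ha

lemma my_field_pow_mem (L : Type*) [Field L] [Fintype L] (k : ℕ) (x : L) (hx : x ≠ 0) :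
    (∃ t : L, t ≠ 0 ∧ t ^ k = x) ↔
      x ^ ((Fintype.card L - 1) / Nat.gcd k (Fintype.card L - 1)) = 1 := by
  classical
  have h := my_cyclic_pow_mem (G := Lˣ) k (Units.mk0 x hx)
  rw [Fintype.card_units] at h
  constructor
  · rintro ⟨t, ht0, rfl⟩
    have hmem : ∃ y : Lˣ, y ^ k = Units.mk0 (t ^ k) hx :=
      ⟨Units.mk0 t ht0, by rw [Units.ext_iff]; simp⟩
    have h1 := h.mp hmem
    have h2 := congrArg Units.val h1
    simpa using h2
  · intro hx1
    have h1 : Units.mk0 x hx ^ ((Fintype.card L - 1) / Nat.gcd k (Fintype.card L - 1)) = 1 := by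
      rw [Units.ext_iff]; simpa using hx1
    obtain ⟨y, hy⟩ := h.mpr h1
    refine ⟨(y : L), y.ne_zero, ?_⟩
    have h2 := congrArg Units.val hy
    simpa using h2

set_option maxHeartbeats 1000000 in
/-- Lemma 7.5. -/
theorem nonsquare_power_in_sigma_sub_one_powers
    (p s m : ℕ) (hp : p.Prime) (hodd : Odd p) (hsm : s < m)
    (L : Type*) [Field L] [Fintype L] (hcard : Fintype.card L = p ^ m)
    (n : L) (hn : ¬ ∃ t : L, t ^ 2 = n) :
    ((∃ t : L, t ≠ 0 ∧ t ^ (p ^ s - 1) = -(n ^ ((p ^ s - 1) / 2))) ↔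
      (Odd (s / Nat.gcd s m) ∧ Odd (m / Nat.gcd s m))) ∧
    ((∃ t : L, t ≠ 0 ∧ t ^ (p ^ s - 1) = n ^ ((p ^ s - 1) / 2)) ↔
      Even (s / Nat.gcd s m)) ∧
    (Even (s / Nat.gcd s m) → Odd (m / Nat.gcd s m)) := by
  classical
  have hp1 : 1 ≤ p := hp.one_le
  have hp3 : 3 ≤ p := by
    have := hp.two_le
    rcases hodd with ⟨w, hw⟩
    omega
  have hqodd : Odd (Fintype.card L) := by rw [hcard]; exact hodd.pow
  have hchar : ringChar L ≠ 2 := by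
    intro h
    have h2 := FiniteField.even_card_of_char_two h
    rw [Nat.odd_iff] at hqodd
    omega
  have hn0 : n ≠ 0 := by rintro rfl; exact hn ⟨0, by simp⟩
  have hns : ¬ IsSquare n := by rintro ⟨t, rfl⟩; exact hn ⟨t, sq t⟩
  have heuler : n ^ (Fintype.card L / 2) = -1 := by
    rcases FiniteField.pow_dichotomy hchar hn0 with h | h
    · exact absurd ((FiniteField.isSquare_iff hchar hn0).2 h) hns
    · exact h
  have hneg1 : (-1 : L) ≠ 1 := by
    intro h
    exact hns ((FiniteField.isSquare_iff hchar hn0).2 (by rw [heuler, h]))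
  rcases Nat.eq_zero_or_pos s with rfl | hs
  · -- case s = 0
    have h0 : p ^ 0 - 1 = 0 := by norm_num
    have hm0 : 0 < m := hsm
    refine ⟨?_, ?_, ?_⟩
    · rw [h0]
      simp only [Nat.zero_div, pow_zero]
      constructor
      · rintro ⟨t, -, h⟩
        exact absurd h.symm hneg1
      · rintro ⟨h, -⟩
        exact absurd h (by decide)
    · rw [h0]
      simp only [Nat.zero_div, pow_zero]
      constructor
      · intro _; exact Even.zero
      · intro _; exact ⟨1, one_ne_zero, trivial⟩
    · intro _
      rw [Nat.gcd_zero_left, Nat.div_self hm0]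
      exact odd_one
  · -- case s ≥ 1
    set d := Nat.gcd s m with hd
    have hd0 : 0 < d := Nat.gcd_pos_of_pos_left m hs
    have hds : d ∣ s := Nat.gcd_dvd_left s m
    have hdm : d ∣ m := Nat.gcd_dvd_right s m
    have hcop : Nat.Coprime (s / d) (m / d) := Nat.coprime_div_gcd_div_gcd hd0
    have hnotboth : ¬ (Even (s / d) ∧ Even (m / d)) := by
      rintro ⟨h1, h2⟩
      have h3 : (2 : ℕ) ∣ Nat.gcd (s / d) (m / d) := Nat.dvd_gcd h1.two_dvd h2.two_dvd
      rw [Nat.Coprime] at hcop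
      omega
    have hthird : Even (s / d) → Odd (m / d) := by
      intro h1
      rw [← Nat.not_even_iff_odd]
      intro h2
      exact hnotboth ⟨h1, h2⟩
    set e := p ^ s - 1 with he
    set N := p ^ m - 1 with hN
    set c := p ^ d - 1 with hc
    have hpd : Odd (p ^ d) := hodd.pow
    have hpd3 : 3 ≤ p ^ d := le_trans hp3 (Nat.le_self_pow hd0.ne' p)
    have hc2 : 2 ≤ c := by omega
    have hceven : c % 2 = 0 := by
      rw [Nat.odd_iff] at hpd; omega
    -- e = c * t with parity of t = parity of s/d
    obtain ⟨t, ht, htp⟩ := my_parity_quot p d hodd hd0 (s / d)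
    rw [Nat.mul_div_cancel' hds, ← hc] at ht
    have het : e = c * t := by
      have hps : 1 ≤ p ^ s := Nat.one_le_pow _ _ (by omega)
      omega
    obtain ⟨T, hT, hTp⟩ := my_parity_quot p d hodd hd0 (m / d)
    rw [Nat.mul_div_cancel' hdm, ← hc] at hT
    have hNT : N = c * T := by
      have hpm : 1 ≤ p ^ m := Nat.one_le_pow _ _ (by omega)
      omega
    have hgcd : Nat.gcd e N = c := by
      rw [he, hN, my_gcd_pow_sub_one p hp1 s m]
    have hNdc : N / Nat.gcd e N = T := by
      rw [hgcd, hNT, Nat.mul_div_cancel_left _ (by omega : 0 < c)]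
    -- half exponents
    set c2 := c / 2 with hc2def
    have hcc : c = 2 * c2 := by omega
    have he2 : e / 2 = c2 * t := by
      have h4 : e = 2 * (c2 * t) := by rw [het, hcc]; ring
      omega
    have hN2' : N = 2 * (c2 * T) := by rw [hNT, hcc]; ring
    have hq2 : Fintype.card L / 2 = c2 * T := by
      rw [hcard]
      have hpm : 1 ≤ p ^ m := Nat.one_le_pow _ _ (by omega)
      have h5 : p ^ m = 2 * (c2 * T) + 1 := by omega
      omega
    have heuler2 : n ^ (c2 * T) = -1 := by rw [← hq2]; exact heuler
    -- key computation : (n ^ (e/2)) ^ T = (-1) ^ t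
    have hkey : (n ^ (e / 2)) ^ T = (-1 : L) ^ t := by
      rw [← pow_mul, he2, ← heuler2, ← pow_mul]
      congr 1
      ring
    have hcardN : Fintype.card L - 1 = N := by rw [hcard]
    -- part (ii)
    have hx2 : n ^ (e / 2) ≠ 0 := pow_ne_zero _ hn0
    have part2 : (∃ u : L, u ≠ 0 ∧ u ^ e = n ^ (e / 2)) ↔ Even (s / d) := by
      rw [my_field_pow_mem L e _ hx2, hcardN, hNdc, hkey,
        neg_one_pow_eq_one_iff_even hneg1]
      rw [← Nat.not_odd_iff_even, ← Nat.not_odd_iff_even, htp]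
    -- part (i)
    have hx1 : -(n ^ (e / 2)) ≠ 0 := neg_ne_zero.mpr hx2
    have part1 : (∃ u : L, u ≠ 0 ∧ u ^ e = -(n ^ (e / 2))) ↔
        (Odd (s / d) ∧ Odd (m / d)) := by
      rw [my_field_pow_mem L e _ hx1, hcardN, hNdc, neg_pow, hkey, ← pow_add,
        neg_one_pow_eq_one_iff_even hneg1]
      rw [Nat.even_add, ← Nat.not_odd_iff_even, ← Nat.not_odd_iff_even, htp, hTp]
      have hnb := hnotboth
      rw [← Nat.not_odd_iff_even, ← Nat.not_odd_iff_even] at hnb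
      tauto
    exact ⟨part1, part2, hthird⟩
end

section
/- Let p be an odd prime, L = F_{p^m}, σ = p^s with 0 < s < m, and suppose B(p,m,s,l,n,N) is a presemifield (l,n,N ∈ L*). Then B(p,m,s,l,n,N) is isotopic to a commutative presemifield if and only if there is (v₀,v₁) ≠ (0,0) in L × L such that, setting f := n v₀ + l n v₀^σ − l n N v₁^σ, both equations hold: l f^σ = nN v₀ + l nN v₀^σ − nN v₁, and v₀ = l v₀^σ + n v₁ − l n N v₁^σ. In particular such (v₀,v₁) exists whenever either (i) N² = n^{σ−1} and l ∈ (1/N)·L*^{σ−1}, or (ii) N = n^{σ−1} and l ∈ L*^{σ−1}. -/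
/-- `star` is isotopic to a commutative presemifield. -/
def IsotopicToCommutative {α : Type*} [AddCommGroup α] (star : α → α → α) : Prop :=
  ∃ (cdot : α → α → α) (A B C : α ≃+ α),
    (∀ x y z : α, cdot (x + y) z = cdot x z + cdot y z) ∧
    (∀ x y z : α, cdot x (y + z) = cdot x y + cdot x z) ∧
    (∀ x y : α, cdot x y = 0 → x = 0 ∨ y = 0) ∧
    (∀ x y : α, cdot x y = cdot y x) ∧
    (∀ x y : α, star (A x) (B y) = C (cdot x y))

/-- The two equations of Theorem 7.10, with `f = n v₀ + l n v₀^σ - l n N v₁^σ`. -/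
def BcommEqs {L : Type*} [Field L] (σ : ℕ) (l n N v₀ v₁ : L) : Prop :=
  l * (n * v₀ + l * n * v₀ ^ σ - l * n * N * v₁ ^ σ) ^ σ
      = n * N * v₀ + l * n * N * v₀ ^ σ - n * N * v₁ ∧
    v₀ = l * v₀ ^ σ + n * v₁ - l * n * N * v₁ ^ σ

open Polynomial in
private lemma poly_trick {L : Type*} [Field L] [Fintype L] {q : ℕ}
    (hq1 : 1 < q) (hqcard : q < Fintype.card L) (α β : L)
    (h : ∀ t : L, α * t + β * t ^ q = 0) : α = 0 ∧ β = 0 := by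
  have hP : (C α * X + C β * X ^ q : L[X]) = 0 := by
    apply eq_zero_of_natDegree_lt_card_of_eval_eq_zero _ Function.injective_id
    · intro t; simpa using h t
    · calc natDegree (C α * X + C β * X ^ q : L[X])
          ≤ max (natDegree (C α * X : L[X])) (natDegree (C β * X ^ q : L[X])) :=
            natDegree_add_le _ _
        _ ≤ q := by
            apply max_le
            · exact (natDegree_C_mul_le _ _).trans (by simp; omega)
            · exact (natDegree_C_mul_le _ _).trans (by simp)
        _ < Fintype.card L := hqcard
  constructor
  · have := congrArg (fun P => coeff P 1) hP
    simp only [coeff_add, coeff_C_mul, coeff_X_one, coeff_X_pow, coeff_zero, mul_one,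
      if_neg (by omega : ¬ (1 = q))] at this
    simpa using this
  · have := congrArg (fun P => coeff P q) hP
    simp only [coeff_add, coeff_C_mul, coeff_X_pow, coeff_zero, coeff_X,
      if_neg (by omega : ¬ (1 = q)), if_pos rfl] at this
    simpa using this

private lemma charp_of_card {L : Type*} [Field L] [Fintype L] {p m : ℕ} (hp : p.Prime)
    (hm : 0 < m) (hcard : Fintype.card L = p ^ m) : CharP L p := by
  have h0 : ((p : L)) ^ m = 0 := by
    have := Nat.cast_card_eq_zero L
    rw [hcard] at this; push_cast at this; exact this
  exact (CharP.charP_iff_prime_eq_zero hp).2 ((pow_eq_zero_iff hm.ne').1 h0)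
/-- Theorem 7.10. -/
theorem B_family_commutative_iff
    (p m s : ℕ) (hp : p.Prime) (hodd : Odd p) (hs : 0 < s) (hsm : s < m)
    (L : Type*) [Field L] [Fintype L] (hcard : Fintype.card L = p ^ m)
    (l n N : L) (hl : l ≠ 0) (hn : n ≠ 0) (hN : N ≠ 0)
    (hpre : ∀ x y : L × L, Xmul (p ^ s) l n N 1 x y = 0 → x = 0 ∨ y = 0) :
    (IsotopicToCommutative (Xmul (p ^ s) l n N 1) ↔
      ∃ v₀ v₁ : L, (v₀, v₁) ≠ (0, 0) ∧ BcommEqs (p ^ s) l n N v₀ v₁) ∧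
    (((N ^ 2 = n ^ (p ^ s - 1) ∧ ∃ t : L, t ≠ 0 ∧ l = (1 / N) * t ^ (p ^ s - 1)) ∨
        (N = n ^ (p ^ s - 1) ∧ ∃ t : L, t ≠ 0 ∧ l = t ^ (p ^ s - 1))) →
      ∃ v₀ v₁ : L, (v₀, v₁) ≠ (0, 0) ∧ BcommEqs (p ^ s) l n N v₀ v₁) := by
  haveI : Fact p.Prime := ⟨hp⟩
  haveI : CharP L p := charp_of_card hp (by omega) hcard
  set q := p ^ s with hqdef
  have hq0 : q ≠ 0 := pow_ne_zero _ hp.pos.ne'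
  have hq1 : 1 < q := by
    calc 1 < p := hp.one_lt
    _ ≤ p ^ s := Nat.le_self_pow hs.ne' p
  have hqcard : q < Fintype.card L := by
    rw [hcard, hqdef]; exact Nat.pow_lt_pow_right hp.one_lt hsm
  have hpoly : ∀ α β : L, (∀ t : L, α * t + β * t ^ q = 0) → α = 0 ∧ β = 0 :=
    fun α β h => poly_trick hq1 hqcard α β h
  have frobA : ∀ a b : L, (a + b) ^ q = a ^ q + b ^ q := fun a b => by
    rw [hqdef]; exact add_pow_char_pow a b p s
  have frobS : ∀ a b : L, (a - b) ^ q = a ^ q - b ^ q := fun a b => by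
    rw [hqdef]; exact sub_pow_char_pow a b s
  have star0 : ∀ y : L × L, Xmul q l n N 1 0 y = 0 := fun y => by
    simp [Xmul, Xh, zero_pow hq0]
  have staraddl : ∀ x x' y : L × L,
      Xmul q l n N 1 (x + x') y = Xmul q l n N 1 x y + Xmul q l n N 1 x' y := by
    intro x x' y
    refine Prod.ext ?_ ?_ <;>
      simp only [Xmul, Xh, Prod.fst_add, Prod.snd_add, frobA, mul_pow] <;> ring
  have staraddr : ∀ x y y' : L × L,
      Xmul q l n N 1 x (y + y') = Xmul q l n N 1 x y + Xmul q l n N 1 x y' := by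
    intro x y y'
    refine Prod.ext ?_ ?_ <;>
      simp only [Xmul, Xh, Prod.fst_add, Prod.snd_add, frobA, mul_pow] <;> ring
  constructor
  · constructor
    · -- isotopic → exists v
      rintro ⟨cdot, A, B, C, hal, har, hzd, hcomm, hiso⟩
      set G : L × L ≃+ L × L := B.symm.trans A with hGdef
      have key : ∀ u w : L × L, Xmul q l n N 1 (G u) w = Xmul q l n N 1 (G w) u := by
        intro u w
        have h1 := hiso (B.symm u) (B.symm w)
        have h2 := hiso (B.symm w) (B.symm u)
        rw [B.apply_symm_apply] at h1 h2
        rw [hcomm] at h1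
        simp only [hGdef, AddEquiv.trans_apply]
        exact h1.trans h2.symm
      obtain ⟨a1, a2, ha⟩ : ∃ u v : L, G (1, 0) = (u, v) := ⟨_, _, rfl⟩
      obtain ⟨b1, b2, hb⟩ : ∃ u v : L, G (0, 1) = (u, v) := ⟨_, _, rfl⟩
      have key2 : ∀ x y : L × L,
          (G x).1 * y.2 + (G x).2 * y.1 = (G y).1 * x.2 + (G y).2 * x.1 :=
        fun x y => congrArg Prod.snd (key x y)
      have hG1 : ∀ x : L × L, (G x).1 = b2 * x.1 + b1 * x.2 := by
        intro x
        have h := key2 x (0, 1)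
        rw [hb] at h
        simp at h
        linear_combination h
      have hG2 : ∀ x : L × L, (G x).2 = a2 * x.1 + a1 * x.2 := by
        intro x
        have h := key2 x (1, 0)
        rw [ha] at h
        simp at h
        linear_combination h
      have ha1b2 : a1 = b2 := by
        have h := hG1 (1, 0)
        rw [ha] at h
        simpa using h
      have hGt : ∀ t : L, G (t, 0) = (b2 * t, a2 * t) := by
        intro t
        refine Prod.ext ?_ ?_
        · rw [hG1]; simp
        · rw [hG2]; simp
      have hG10 : G (1, 0) = (b2, a2) := by rw [ha, ha1b2]
      have e1 : ((b2 - n * a2) - (l * b2 ^ q - l * n * N * a2 ^ q)) = 0 ∧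
          ((l * b2 ^ q - l * n * N * a2 ^ q) - (b2 - n * a2)) = 0 := by
        apply hpoly
        intro t
        have h := congrArg Prod.fst (key (t, 0) (1, 0))
        rw [hGt t, hG10] at h
        simp only [Xmul, Xh] at h
        simp only [mul_pow, one_pow, zero_pow hq0, mul_zero, zero_mul, mul_one, add_zero,
          sub_zero, zero_sub] at h
        linear_combination h
      have e23 : ((n * N * b2 - n * N * a2) - (l * b1 ^ q - l * n * N * b2 ^ q)) = 0 ∧
          ((n * l * b2 ^ q - n * l * N * a2 ^ q) - (b1 - n * b2)) = 0 := by
        apply hpoly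
        intro t
        have h := congrArg Prod.fst (key (t, 0) (0, 1))
        rw [hGt t, hb] at h
        simp only [Xmul, Xh] at h
        simp only [mul_pow, one_pow, zero_pow hq0, mul_zero, zero_mul, mul_one, add_zero,
          sub_zero, zero_sub] at h
        linear_combination h
      refine ⟨b2, a2, ?_, ?_, ?_⟩
      · intro hcontra
        rw [Prod.mk.injEq] at hcontra
        have h10 : G (1, 0) = G 0 := by
          rw [hG10, map_zero, hcontra.1, hcontra.2, ← Prod.mk_zero_zero]
        have := G.injective h10
        simp [Prod.ext_iff] at this
      · -- first BcommEqs equation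
        have hb1 : b1 = n * b2 + l * n * b2 ^ q - l * n * N * a2 ^ q := by
          linear_combination - e23.2
        show l * (n * b2 + l * n * b2 ^ q - l * n * N * a2 ^ q) ^ q
            = n * N * b2 + l * n * N * b2 ^ q - n * N * a2
        rw [show (n * b2 + l * n * b2 ^ q - l * n * N * a2 ^ q) = b1 from hb1.symm]
        linear_combination - e23.1
      · show b2 = l * b2 ^ q + n * a2 - l * n * N * a2 ^ q
        linear_combination e1.1
    · -- exists v → isotopic
      rintro ⟨v₀, v₁, hv, hBC⟩
      have hI : l * (n * v₀ + l * n * v₀ ^ q - l * n * N * v₁ ^ q) ^ q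
          = n * N * v₀ + l * n * N * v₀ ^ q - n * N * v₁ := hBC.1
      have hII : v₀ = l * v₀ ^ q + n * v₁ - l * n * N * v₁ ^ q := hBC.2
      have hI' : l * (n ^ q * v₀ ^ q + l ^ q * n ^ q * (v₀ ^ q) ^ q
            - l ^ q * n ^ q * N ^ q * (v₁ ^ q) ^ q)
          = n * N * v₀ + l * n * N * v₀ ^ q - n * N * v₁ := by
        rw [← hI, frobS, frobA]
        simp only [mul_pow]
      set Gf : L × L → L × L := fun x =>
        (v₀ * x.1 + (n * v₀ + l * n * v₀ ^ q - l * n * N * v₁ ^ q) * x.2,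
          v₁ * x.1 + v₀ * x.2) with hGf
      have hGfadd : ∀ x y : L × L, Gf (x + y) = Gf x + Gf y := by
        intro x y
        refine Prod.ext ?_ ?_ <;>
          simp only [hGf, Prod.fst_add, Prod.snd_add] <;> ring
      have hsym : ∀ x y : L × L, Xmul q l n N 1 (Gf x) y = Xmul q l n N 1 (Gf y) x := by
        intro x y
        refine Prod.ext ?_ ?_
        · simp only [Xmul, Xh, hGf, frobA, frobS, mul_pow]
          linear_combination
            ((x.1 * y.1 ^ q - x.1 ^ q * y.1) - n * N * (x.2 * y.2 ^ q - x.2 ^ q * y.2)) * hII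
            + (-(x.1 * y.2 ^ q - x.2 ^ q * y.1) - n * (x.2 * y.2 ^ q - x.2 ^ q * y.2)) * hI'
        · simp only [Xmul, hGf]
          ring
      have hker : ∀ x : L × L, Gf x = 0 → x = 0 := by
        intro x hx
        by_contra hx0
        have hall : ∀ y : L × L, Gf y = 0 := by
          intro y
          rcases hpre (Gf y) x (by rw [← hsym x y, hx]; exact star0 y) with h | h
          · exact h
          · exact absurd h hx0
        have h10 := hall (1, 0)
        simp only [hGf, mul_one, mul_zero, add_zero] at h10
        rw [← Prod.mk_zero_zero, Prod.mk.injEq] at h10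
        exact hv (by rw [Prod.mk.injEq]; exact h10)
      let Ghom : L × L →+ L × L := AddMonoidHom.mk' Gf hGfadd
      have hGhom : ∀ x, Ghom x = Gf x := fun x => rfl
      have hinj : Function.Injective Ghom :=
        (injective_iff_map_eq_zero Ghom).2 (fun a ha => hker a ha)
      have hbij : Function.Bijective Ghom := Finite.injective_iff_bijective.1 hinj
      refine ⟨fun x y => Xmul q l n N 1 (Gf x) y, AddEquiv.ofBijective Ghom hbij,
        AddEquiv.refl _, AddEquiv.refl _, ?_, ?_, ?_, ?_, ?_⟩
      · intro x y z
        show Xmul q l n N 1 (Gf (x + y)) z = Xmul q l n N 1 (Gf x) z + Xmul q l n N 1 (Gf y) z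
        rw [hGfadd]
        exact staraddl _ _ _
      · intro x y z
        exact staraddr _ _ _
      · intro x y h
        rcases hpre _ _ h with h' | h'
        · exact Or.inl (hker _ h')
        · exact Or.inr h'
      · intro x y
        exact hsym x y
      · intro x y
        rfl
  · -- part 2
    have hoddq : Odd q := by rw [hqdef]; exact hodd.pow
    obtain ⟨r, hr⟩ : ∃ r, q = r + 1 := ⟨q - 1, by omega⟩
    rintro (⟨hN2, t, ht, hlt⟩ | ⟨hN1, t, ht, hlt⟩)
    · -- case (i)
      refine ⟨0, t⁻¹, ?_, ?_, ?_⟩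
      · simp [Prod.ext_iff, ht]
      · show l * (n * 0 + l * n * 0 ^ q - l * n * N * (t⁻¹) ^ q) ^ q
            = n * N * 0 + l * n * N * 0 ^ q - n * N * t⁻¹
        rw [hlt]
        rw [hr] at hN2 ⊢
        simp only [Nat.add_sub_cancel] at hN2 ⊢
        rw [zero_pow (by omega : r + 1 ≠ 0)]
        rw [show (n * 0 + (1 / N * t ^ r) * n * 0 - (1 / N * t ^ r) * n * N * (t⁻¹) ^ (r+1))
            = -((1 / N * t ^ r) * n * N * (t⁻¹) ^ (r+1)) by ring]
        rw [Odd.neg_pow (by rw [← hr]; exact hoddq)]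
        simp only [inv_pow]
        field_simp
        rw [show t ^ r * n / t ^ (r + 1) = n / t by rw [pow_succ]; field_simp, div_pow]
        rw [show t ^ r * (n ^ (r + 1) / t ^ (r + 1)) * t = n ^ (r + 1) by
          rw [pow_succ t r]; field_simp]
        linear_combination n * hN2
      · show (0 : L) = l * 0 ^ q + n * t⁻¹ - l * n * N * (t⁻¹) ^ q
        rw [hlt, hr, Nat.add_sub_cancel, zero_pow (by omega : r + 1 ≠ 0)]
        simp only [inv_pow]
        field_simp
        ring
    · -- case (ii)
      refine ⟨t⁻¹, 0, ?_, ?_, ?_⟩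
      · simp [Prod.ext_iff, ht]
      · show l * (n * t⁻¹ + l * n * (t⁻¹) ^ q - l * n * N * 0 ^ q) ^ q
            = n * N * t⁻¹ + l * n * N * (t⁻¹) ^ q - n * N * 0
        rw [hlt, hN1, zero_pow hq0]
        rw [show (n * t⁻¹ + t ^ (q-1) * n * (t⁻¹) ^ q - t ^ (q-1) * n * n ^ (q-1) * 0)
            = (n * t⁻¹ + t ^ (q-1) * n * (t⁻¹) ^ q) by ring]
        rw [frobA]
        simp only [mul_pow]
        rw [hr]
        simp only [Nat.add_sub_cancel]
        simp only [inv_pow]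
        field_simp
        ring
      · show t⁻¹ = l * (t⁻¹) ^ q + n * 0 - l * n * N * 0 ^ q
        rw [hlt, hr, Nat.add_sub_cancel, zero_pow (by omega : r + 1 ≠ 0)]
        simp only [inv_pow]
        field_simp
        ring
end

section
/- Let p be an odd prime, L = F_{p^m}, σ = p^s with 0 < s < m, d = gcd(s,m) with m/d odd, and let 0 ≠ n ∈ L be such that t^{σ+1} + (n^σ − n)t + n − n² ≠ 0 for all t ∈ L. Then B(p,m,s,1,n,n^{σ−1}) is a presemifield and is isotopic to a commutative presemifield. Moreover, the displayed polynomial condition is satisfied whenever n lies in K₁* (K₁ = F_{p^d} the fixed field of x ↦ x^σ in L) and 1 − 1/n is a non-square in K₁. -/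
/-- The additive "shear" bijection `(y₁, y₂) ↦ (y₁ - 2n y₂, y₂)` of `L × L`. -/
def shearEquiv {L : Type*} [Field L] (n : L) : (L × L) ≃+ (L × L) where
  toFun y := (y.1 - 2 * n * y.2, y.2)
  invFun y := (y.1 + 2 * n * y.2, y.2)
  left_inv y := by simp only [Prod.ext_iff]; exact ⟨by ring, trivial⟩
  right_inv y := by simp only [Prod.ext_iff]; exact ⟨by ring, trivial⟩
  map_add' x y := by simp only [Prod.ext_iff, Prod.fst_add, Prod.snd_add]; exact ⟨by ring, trivial⟩

/-- Theorem 7.15. -/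
theorem B_family_commutative_parametric
    (p m s : ℕ) (hp : p.Prime) (hodd : Odd p) (hs : 0 < s) (hsm : s < m)
    (L : Type*) [Field L] [Fintype L] (hcard : Fintype.card L = p ^ m)
    (hmd : Odd (m / Nat.gcd s m))
    (n : L) (hn : n ≠ 0) :
    ((∀ t : L, t ^ (p ^ s + 1) + (n ^ (p ^ s) - n) * t + n - n ^ 2 ≠ 0) →
      (∀ x y : L × L, Xmul (p ^ s) 1 n (n ^ (p ^ s - 1)) 1 x y = 0 → x = 0 ∨ y = 0) ∧
      IsotopicToCommutative (Xmul (p ^ s) 1 n (n ^ (p ^ s - 1)) 1)) ∧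
    ((n ^ (p ^ s) = n ∧ ¬ ∃ t : L, t ^ (p ^ s) = t ∧ t ^ 2 = 1 - 1 / n) →
      ∀ t : L, t ^ (p ^ s + 1) + (n ^ (p ^ s) - n) * t + n - n ^ 2 ≠ 0) := by
  haveI : Fact p.Prime := ⟨hp⟩
  -- characteristic of L is p
  haveI hcharP : CharP L p := by
    have h1 : CharP L (ringChar L) := ringChar.charP L
    have h2 : (ringChar L).Prime := CharP.char_is_prime L (ringChar L)
    obtain ⟨k, -, hk⟩ := FiniteField.card L (ringChar L)
    have hdvd : ringChar L ∣ p ^ m := by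
      rw [← hcard, hk]; exact dvd_pow_self _ k.2.ne'
    have heq : ringChar L = p :=
      (Nat.prime_dvd_prime_iff_eq h2 hp).mp (h2.dvd_of_dvd_pow hdvd)
    rwa [heq] at h1
  have hp2 : p ≠ 2 := by rintro rfl; simp [Nat.odd_iff] at hodd
  have h2L : (2 : L) ≠ 0 := by
    intro h2
    have h := (CharP.cast_eq_zero_iff L p 2).mp (by exact_mod_cast h2)
    exact hp2 ((Nat.prime_dvd_prime_iff_eq hp Nat.prime_two).mp h)
  have hσpos : 0 < p ^ s := pow_pos hp.pos s
  have hσodd : Odd (p ^ s) := hodd.pow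
  have hneg1 : (-1 : L) ^ p ^ s = -1 := hσodd.neg_one_pow
  have hadd : ∀ x y : L, (x + y) ^ p ^ s = x ^ p ^ s + y ^ p ^ s := fun x y =>
    add_pow_char_pow x y p s
  have hsub : ∀ x y : L, (x - y) ^ p ^ s = x ^ p ^ s - y ^ p ^ s := fun x y =>
    sub_pow_char_pow x y s
  have hcardL : ∀ e : L, e ^ p ^ m = e := fun e => by
    rw [← hcard]; exact FiniteField.pow_card e
  -- key lemma: x ↦ x^{p^s} has no "eigenvalue −1" since m/gcd(s,m) is odd
  have L0 : ∀ e : L, e ^ p ^ s = -e → e = 0 := by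
    intro e he
    have hj : ∀ j : ℕ, e ^ p ^ (s * j) = (-1) ^ j * e := by
      intro j
      induction j with
      | zero => simp
      | succ j ih =>
        have h1 : p ^ (s * (j + 1)) = p ^ (s * j) * p ^ s := by
          rw [← pow_add]; ring_nf
        calc e ^ p ^ (s * (j + 1)) = (e ^ p ^ (s * j)) ^ p ^ s := by rw [h1, pow_mul]
          _ = ((-1) ^ j * e) ^ p ^ s := by rw [ih]
          _ = ((-1 : L) ^ p ^ s) ^ j * e ^ p ^ s := by
              rw [mul_pow, ← pow_mul, ← pow_mul, mul_comm j (p ^ s)]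
          _ = (-1) ^ (j + 1) * e := by rw [hneg1, he, pow_succ]; ring
    have hmi : ∀ i : ℕ, e ^ p ^ (m * i) = e := by
      intro i
      induction i with
      | zero => simp
      | succ i ih => rw [show m * (i + 1) = m * i + m by ring, pow_add, pow_mul, ih, hcardL]
    have hgs : Nat.gcd s m ∣ s := Nat.gcd_dvd_left s m
    have hgm : Nat.gcd s m ∣ m := Nat.gcd_dvd_right s m
    have hexp : s * (m / Nat.gcd s m) = m * (s / Nat.gcd s m) := by
      rw [← Nat.mul_div_assoc s hgm, ← Nat.mul_div_assoc m hgs, mul_comm]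
    have h1 := hj (m / Nat.gcd s m)
    rw [hexp, hmi, hmd.neg_one_pow] at h1
    have h2 : (2 : L) * e = 0 := by linear_combination h1
    exact (mul_eq_zero.mp h2).resolve_left h2L
  have hσ1 : p ^ s - 1 + 1 = p ^ s := Nat.succ_pred_eq_of_pos hσpos
  have hnN : n * n ^ (p ^ s - 1) = n ^ p ^ s := by
    conv_rhs => rw [← hσ1, pow_succ]
    ring
  have hXh : ∀ a b c d : L, Xh (p ^ s) 1 n (n ^ (p ^ s - 1)) 1 a b c d =
      a * c ^ p ^ s - n ^ p ^ s * (b * d ^ p ^ s) +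
      (a ^ p ^ s * c - n ^ p ^ s * (b ^ p ^ s * d)) +
      (n ^ p ^ s * (a * d ^ p ^ s) - n * (b * c ^ p ^ s)) +
      (n * (a ^ p ^ s * d) - n ^ p ^ s * (b ^ p ^ s * c)) := by
    intro a b c d
    simp only [Xh]
    linear_combination (a * d ^ p ^ s - b * d ^ p ^ s - b ^ p ^ s * d - b ^ p ^ s * c) * hnN
  have hshear : ∀ y : L × L, shearEquiv n y = (y.1 - 2 * n * y.2, y.2) := fun _ => rfl
  have h2σ : (2 : L) ^ p ^ s = 2 := by
    have h := hadd 1 1; norm_num at h; exact h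
  constructor
  · intro Hf
    have hn2 : n - n ^ 2 ≠ 0 := by
      have h := Hf 0
      simpa [zero_pow hσpos.ne', zero_pow (Nat.succ_ne_zero (p ^ s))] using h
    have L1 : ∀ u : L, u ^ p ^ s * u ≠ n ^ p ^ s * (n - 1) := by
      intro u hu
      have hun : u ≠ n := by
        intro hEq
        rw [hEq] at hu
        have h0 : n ^ p ^ s = 0 := by linear_combination hu
        exact hn (by simpa [pow_eq_zero_iff hσpos.ne'] using h0)
      have hT2 : u - n ≠ 0 := sub_ne_zero.mpr hun
      have hT2σ : u ^ p ^ s - n ^ p ^ s ≠ 0 := by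
        rw [← hsub]; exact pow_ne_zero _ hT2
      refine Hf (n * (n - 1 - u) / (u - n)) ?_
      have htσ : (n * (n - 1 - u) / (u - n)) ^ p ^ s =
          n ^ p ^ s * (n ^ p ^ s - 1 - u ^ p ^ s) / (u ^ p ^ s - n ^ p ^ s) := by
        rw [div_pow, mul_pow, hsub, hsub, hsub, one_pow]
      rw [pow_succ, htσ]
      field_simp
      linear_combination n * hu
    -- zero-divisor freeness
    have hzd : ∀ x y : L × L, Xmul (p ^ s) 1 n (n ^ (p ^ s - 1)) 1 x y = 0 →
        x = 0 ∨ y = 0 := by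
      rintro ⟨a, b⟩ ⟨c, d⟩ hxy
      have h0 : Xh (p ^ s) 1 n (n ^ (p ^ s - 1)) 1 a b c d = 0 := by
        have := congrArg Prod.fst hxy; simpa [Xmul] using this
      have hc0 : a * d + b * c = 0 := by
        have := congrArg Prod.snd hxy; simpa [Xmul] using this
      rw [hXh] at h0
      by_contra hcon
      push_neg at hcon
      obtain ⟨hx0, hy0⟩ := hcon
      by_cases hb : b = 0
      · subst hb
        have ha : a ≠ 0 := fun h => hx0 (by simp [h, Prod.ext_iff])
        have hd0 : d = 0 := by
          rcases mul_eq_zero.mp (show a * d = 0 by linear_combination hc0) with h | h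
          exacts [absurd h ha, h]
        subst hd0
        have hc : c ≠ 0 := fun h => hy0 (by simp [h, Prod.ext_iff])
        simp only [zero_pow hσpos.ne', mul_zero, zero_mul, sub_zero, add_zero] at h0
        have he : (c * a⁻¹) ^ p ^ s = -(c * a⁻¹) := by
          rw [mul_pow, inv_pow]
          field_simp
          linear_combination h0
        exact hc ((mul_eq_zero.mp (L0 _ he)).resolve_right (inv_ne_zero ha))
      · have hd : d ≠ 0 := by
          intro h; subst h
          have hcc : c = 0 := by
            rcases mul_eq_zero.mp (show b * c = 0 by linear_combination hc0) with h | h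
            exacts [absurd h hb, h]
          exact hy0 (by simp [hcc, Prod.ext_iff])
        have hcσ : a ^ p ^ s * d ^ p ^ s + b ^ p ^ s * c ^ p ^ s = 0 := by
          have h' : (a * d + b * c) ^ p ^ s = 0 := by
            rw [hc0]; exact zero_pow hσpos.ne'
          rwa [hadd, mul_pow, mul_pow] at h'
        have key2 : (n ^ p ^ s * b ^ p ^ s * (a - b) - a ^ p ^ s * (a - n * b)) *
            (d ^ p ^ s * b + d * b ^ p ^ s) = 0 := by
          linear_combination (b ^ p ^ s * b) * h0 +
            (n ^ p ^ s * (b ^ p ^ s) ^ 2 - a ^ p ^ s * b ^ p ^ s) * hc0 +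
            (n * b ^ 2 - a * b) * hcσ
        rcases mul_eq_zero.mp key2 with hP | hD
        · refine L1 ((a - n * b) * b⁻¹) ?_
          rw [mul_pow, inv_pow, hsub, mul_pow]
          field_simp
          linear_combination (-1 : L) * hP
        · have he : (d * b⁻¹) ^ p ^ s = -(d * b⁻¹) := by
            rw [mul_pow, inv_pow]
            field_simp
            linear_combination hD
          exact hd ((mul_eq_zero.mp (L0 _ he)).resolve_right (inv_ne_zero hb))
    refine ⟨hzd, ?_⟩
    -- isotopy to a commutative presemifield
    refine ⟨fun x y => Xmul (p ^ s) 1 n (n ^ (p ^ s - 1)) 1 x (shearEquiv n y),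
      AddEquiv.refl _, shearEquiv n, AddEquiv.refl _, ?_, ?_, ?_, ?_, ?_⟩
    · intro x y z
      simp only [Xmul, hXh, hshear, Prod.fst_add, Prod.snd_add, Prod.mk_add_mk,
        Prod.mk.injEq, hadd]
      constructor <;> ring
    · intro x y z
      simp only [Xmul, hXh, hshear, Prod.fst_add, Prod.snd_add, Prod.mk_add_mk,
        Prod.mk.injEq, hadd, hsub, mul_pow, h2σ]
      constructor <;> ring
    · intro x y h
      rcases hzd _ _ h with h | h
      · exact Or.inl h
      · exact Or.inr ((shearEquiv n).injective (by rw [map_zero]; exact h))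
    · intro x y
      simp only [Xmul, hXh, hshear, Prod.mk.injEq, hsub, mul_pow, h2σ]
      constructor <;> ring
    · intro x y; rfl
  · rintro ⟨hK, hns⟩ t hft
    rw [hK, sub_self, zero_mul, add_zero] at hft
    by_cases h1 : n = 1
    · exact hns ⟨0, zero_pow hσpos.ne', by rw [h1]; norm_num⟩
    · have hn1 : n - 1 ≠ 0 := sub_ne_zero.mpr h1
      have hft' : t ^ p ^ s * t = n ^ 2 - n := by
        rw [← pow_succ]; linear_combination hft
      have heven : Even (p ^ s + 1) := hσodd.add_one
      have h2k : 2 * ((p ^ s + 1) / 2) = p ^ s + 1 := Nat.two_mul_div_two_of_even heven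
      have hk2 : (p ^ s + 1) / 2 * 2 = p ^ s + 1 := Nat.div_mul_cancel heven.two_dvd
      have hu2 : (t ^ ((p ^ s + 1) / 2)) ^ 2 = n ^ 2 - n := by
        rw [← pow_mul, hk2, pow_succ, hft']
      set u := t ^ ((p ^ s + 1) / 2) with hu_def
      have huσ2 : (u ^ p ^ s) ^ 2 = u ^ 2 := by
        rw [← pow_mul, mul_comm (p ^ s) 2, pow_mul, hu2, hsub,
          show ((n : L) ^ 2) ^ p ^ s = (n ^ p ^ s) ^ 2 by rw [← pow_mul, mul_comm, pow_mul],
          hK]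
      have hfac : (u ^ p ^ s - u) * (u ^ p ^ s + u) = 0 := by linear_combination huσ2
      rcases mul_eq_zero.mp hfac with h | h
      · refine hns ⟨u * n⁻¹, ?_, ?_⟩
        · rw [mul_pow, inv_pow, hK, sub_eq_zero.mp h]
        · rw [mul_pow, hu2]
          field_simp
      · have hu0 : u ≠ 0 := by
          intro h0
          rw [h0] at hu2
          have : n * (n - 1) = 0 := by linear_combination -hu2
          rcases mul_eq_zero.mp this with h' | h'
          exacts [hn h', hn1 h']
        exact hu0 (L0 u (by linear_combination h))
end
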